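/- arXiv:2403.12341 — 8 statements merged into one kernel-verified Lean document; each statement's English description precedes it below -/
import Mathlib

section
/- Let x be irrational and v = (p, q) ∈ Z² a nonzero primitive vector with p ≡ 0 mod 2 (i.e. v ∈ Λ^(0)). If the parallelogram P_B(x, v) = {a(p − qx, 0) + b(qx, q) : −1 ≤ a, b ≤ 1} contains no primitive vector of Λ^(0) other than v, −v, and 0, then the parallelogram P_S(x, v) = {a(p − qx, 0) + b(qx, q) : 0 ≤ a, b ≤ 1} contains no vector of Z² other than v and 0. -/
/-- A nonzero integral vector is primitive if it is not a multiple `c • w` with `c ≥ 2`. -/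
def IsPrimitiveVec (v : ℤ × ℤ) : Prop :=
  v ≠ 0 ∧ ∀ c : ℤ, 2 ≤ c → ∀ w : ℤ × ℤ, v ≠ c • w

/-- Membership of an integral vector `u` in the closed parallelogram
`P_B(x, v) = {a(p − qx, 0) + b(qx, q) : −1 ≤ a, b ≤ 1}` where `v = (p, q)`. -/
def MemPB (x : ℝ) (v u : ℤ × ℤ) : Prop :=
  ∃ a b : ℝ, -1 ≤ a ∧ a ≤ 1 ∧ -1 ≤ b ∧ b ≤ 1 ∧
    (u.1 : ℝ) = a * ((v.1 : ℝ) - (v.2 : ℝ) * x) + b * ((v.2 : ℝ) * x) ∧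
    (u.2 : ℝ) = b * (v.2 : ℝ)

/-- Membership in `P_S(x, v) = {a(p − qx, 0) + b(qx, q) : 0 ≤ a, b ≤ 1}`. -/
def MemPS (x : ℝ) (v u : ℤ × ℤ) : Prop :=
  ∃ a b : ℝ, 0 ≤ a ∧ a ≤ 1 ∧ 0 ≤ b ∧ b ≤ 1 ∧
    (u.1 : ℝ) = a * ((v.1 : ℝ) - (v.2 : ℝ) * x) + b * ((v.2 : ℝ) * x) ∧
    (u.2 : ℝ) = b * (v.2 : ℝ)

lemma isPrimitiveVec_iff_gcd (u : ℤ × ℤ) : IsPrimitiveVec u ↔ Int.gcd u.1 u.2 = 1 := by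
  constructor
  · rintro ⟨hne, hc⟩
    by_contra hg
    have h0 : Int.gcd u.1 u.2 ≠ 0 := by
      intro h
      rw [Int.gcd_eq_zero_iff] at h
      exact hne (Prod.ext h.1 h.2)
    have h2 : (2 : ℤ) ≤ (Int.gcd u.1 u.2 : ℤ) := by
      omega
    apply hc (Int.gcd u.1 u.2 : ℤ) h2 (u.1 / (Int.gcd u.1 u.2 : ℤ), u.2 / (Int.gcd u.1 u.2 : ℤ))
    apply Prod.ext
    · exact (Int.mul_ediv_cancel' (Int.gcd_dvd_left _ _)).symm
    · exact (Int.mul_ediv_cancel' (Int.gcd_dvd_right _ _)).symm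
  · intro hg
    refine ⟨?_, ?_⟩
    · intro h
      rw [h] at hg
      simp at hg
    · intro c hc w hw
      have h1 : c ∣ u.1 := ⟨w.1, by rw [hw]; rfl⟩
      have h2 : c ∣ u.2 := ⟨w.2, by rw [hw]; rfl⟩
      have : c ∣ (Int.gcd u.1 u.2 : ℤ) := Int.dvd_coe_gcd h1 h2
      rw [hg] at this
      have := Int.le_of_dvd one_pos this
      omega

/-- Lemma, part (i), for `Λ^(0)`: if `P_B(x,v)` contains no primitive
vector of `Λ^(0)` other than `v`, `−v`, `0`, then `P_S(x,v)` contains no vector of `ℤ²`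
other than `v` and `0`. -/
theorem PS_trivial_of_PB_no_primitive_Lambda0
    (x : ℝ) (hx : Irrational x) (v : ℤ × ℤ) (hv : IsPrimitiveVec v) (hΛ : Even v.1)
    (hB : ∀ u : ℤ × ℤ, IsPrimitiveVec u → Even u.1 → MemPB x v u →
      u = v ∨ u = -v ∨ u = 0) :
    ∀ u : ℤ × ℤ, MemPS x v u → u = v ∨ u = 0 := by
  intro u hu
  obtain ⟨a, b, ha0, ha1, hb0, hb1, hm, hn⟩ := hu
  have hgcd : Int.gcd v.1 v.2 = 1 := (isPrimitiveVec_iff_gcd v).mp hv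
  have hqodd : Odd v.2 := by
    rcases Int.even_or_odd v.2 with he | ho
    · exfalso
      obtain ⟨k, hk⟩ := hΛ
      obtain ⟨l, hl⟩ := he
      have h2 : (2 : ℤ) ∣ (Int.gcd v.1 v.2 : ℤ) :=
        Int.dvd_coe_gcd ⟨k, by omega⟩ ⟨l, by omega⟩
      rw [hgcd] at h2
      omega
    · exact ho
  have hq0 : v.2 ≠ 0 := by
    intro h; rw [h] at hqodd; exact (Int.not_even_iff_odd.mpr hqodd) Even.zero
  have hq0R : (v.2 : ℝ) ≠ 0 := Int.cast_ne_zero.mpr hq0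
  set w : ℤ × ℤ := (2 * u.1 - v.1, 2 * u.2 - v.2) with hw
  have hw2odd : Odd w.2 := by
    obtain ⟨k, hk⟩ := hqodd
    exact ⟨u.2 - k - 1, by simp only [hw]; omega⟩
  have hw2ne : w.2 ≠ 0 := by
    intro h; rw [h] at hw2odd; exact (Int.not_even_iff_odd.mpr hw2odd) Even.zero
  set d : ℕ := Int.gcd w.1 w.2 with hd
  have hdpos : 0 < d := Int.gcd_pos_of_ne_zero_right w.1 hw2ne
  have hdvd1 : (d : ℤ) ∣ w.1 := Int.gcd_dvd_left _ _
  have hdvd2 : (d : ℤ) ∣ w.2 := Int.gcd_dvd_right _ _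
  have hdodd : Odd (d : ℤ) := by
    rcases Int.even_or_odd (d : ℤ) with he | ho
    · exfalso
      obtain ⟨t, ht⟩ := hdvd2
      obtain ⟨s, hs⟩ := he
      have : Even w.2 := ⟨s * t, by rw [ht, hs]; ring⟩
      exact (Int.not_even_iff_odd.mpr hw2odd) this
    · exact ho
  set w' : ℤ × ℤ := (w.1 / (d : ℤ), w.2 / (d : ℤ)) with hw'
  have hw1eq : (d : ℤ) * w'.1 = w.1 := Int.mul_ediv_cancel' hdvd1
  have hw2eq : (d : ℤ) * w'.2 = w.2 := Int.mul_ediv_cancel' hdvd2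
  have hprim : IsPrimitiveVec w' := by
    rw [isPrimitiveVec_iff_gcd]
    exact Int.gcd_div_gcd_div_gcd hdpos
  have heven : Even w'.1 := by
    have hweven : Even w.1 := by
      obtain ⟨k, hk⟩ := hΛ
      exact ⟨u.1 - k, by simp only [hw]; omega⟩
    rcases Int.even_or_odd w'.1 with he | ho
    · exact he
    · exfalso
      have : Odd w.1 := by rw [← hw1eq]; exact hdodd.mul ho
      exact (Int.not_even_iff_odd.mpr this) hweven
  have hdR : (0 : ℝ) < (d : ℝ) := by exact_mod_cast hdpos
  have hd1R : (1 : ℝ) ≤ (d : ℝ) := by exact_mod_cast hdpos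
  have hdne : (d : ℝ) ≠ 0 := ne_of_gt hdR
  -- real versions of w = 2u - v
  have hw1R : ((w.1 : ℤ) : ℝ) = 2 * (u.1 : ℝ) - (v.1 : ℝ) := by
    simp only [hw]; push_cast; ring
  have hw2R : ((w.2 : ℤ) : ℝ) = 2 * (u.2 : ℝ) - (v.2 : ℝ) := by
    simp only [hw]; push_cast; ring
  have hB1 : (d : ℝ) * ((w'.1 : ℤ) : ℝ)
      = (2 * a - 1) * ((v.1 : ℝ) - (v.2 : ℝ) * x) + (2 * b - 1) * ((v.2 : ℝ) * x) := by
    have : (d : ℝ) * ((w'.1 : ℤ) : ℝ) = ((w.1 : ℤ) : ℝ) := by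
      rw [← hw1eq]; push_cast; ring
    rw [this, hw1R, hm]; ring
  have hB2 : (d : ℝ) * ((w'.2 : ℤ) : ℝ) = (2 * b - 1) * (v.2 : ℝ) := by
    have : (d : ℝ) * ((w'.2 : ℤ) : ℝ) = ((w.2 : ℤ) : ℝ) := by
      rw [← hw2eq]; push_cast; ring
    rw [this, hw2R, hn]; ring
  have hmem : MemPB x v w' := by
    refine ⟨(2 * a - 1) / d, (2 * b - 1) / d, ?_, ?_, ?_, ?_, ?_, ?_⟩
    · rw [le_div_iff₀ hdR]; nlinarith
    · rw [div_le_one hdR]; nlinarith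
    · rw [le_div_iff₀ hdR]; nlinarith
    · rw [div_le_one hdR]; nlinarith
    · rw [div_mul_eq_mul_div, div_mul_eq_mul_div, ← add_div,
        eq_div_iff hdne]
      linear_combination hB1
    · rw [div_mul_eq_mul_div, eq_div_iff hdne]
      linear_combination hB2
  rcases hB w' hprim heven hmem with h | h | h
  · -- w' = v ⇒ d = 2b - 1 ≤ 1 ⇒ d = 1 ⇒ u = v
    left
    have hcancel : (d : ℝ) * (v.2 : ℝ) = (2 * b - 1) * (v.2 : ℝ) := by
      rw [← hB2, h]
    have hdb : (d : ℝ) = 2 * b - 1 := mul_right_cancel₀ hq0R hcancel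
    have hd1 : d = 1 := by
      have hle : (d : ℝ) ≤ 1 := by rw [hdb]; linarith
      have : d ≤ 1 := by exact_mod_cast hle
      omega
    have e1 : 2 * u.1 - v.1 = v.1 := by
      have := hw1eq
      rw [h, hd1] at this
      simpa using this.symm
    have e2 : 2 * u.2 - v.2 = v.2 := by
      have := hw2eq
      rw [h, hd1] at this
      simpa using this.symm
    apply Prod.ext <;> omega
  · -- w' = -v ⇒ d = 1 - 2b ≤ 1 ⇒ d = 1 ⇒ u = 0
    right
    have hcancel : (-(d : ℝ)) * (v.2 : ℝ) = (2 * b - 1) * (v.2 : ℝ) := by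
      have : (d : ℝ) * ((w'.2 : ℤ) : ℝ) = (d : ℝ) * (-(v.2 : ℝ)) := by
        rw [h, Prod.snd_neg]; push_cast; ring
      rw [this] at hB2
      linear_combination hB2
    have hdb : -(d : ℝ) = 2 * b - 1 := mul_right_cancel₀ hq0R hcancel
    have hd1 : d = 1 := by
      have hle : (d : ℝ) ≤ 1 := by nlinarith
      have : d ≤ 1 := by exact_mod_cast hle
      omega
    have e1 : 2 * u.1 - v.1 = -v.1 := by
      have := hw1eq
      rw [h, hd1] at this
      exact (by simpa using this.symm : w.1 = -v.1)
    have e2 : 2 * u.2 - v.2 = -v.2 := by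
      have := hw2eq
      rw [h, hd1] at this
      exact (by simpa using this.symm : w.2 = -v.2)
    have : u.1 = 0 := by omega
    have : u.2 = 0 := by omega
    apply Prod.ext <;> simp <;> omega
  · -- w' = 0 impossible since w.2 is odd
    exfalso
    apply hw2ne
    rw [← hw2eq, h]
    simp
end

section
/- Let x be irrational and v ∈ Z² a nonzero primitive vector lying in Λ^(α) for some α ∈ {0, 1, ∞}. If the parallelogram P_S(x, v) contains no vector of Z² other than v and 0, then P_B(x, v) contains no primitive vector of Λ^(α) other than v, −v, and 0. -/
/-- The index-2 sublattices `Λ^(0)`, `Λ^(1)`, `Λ^(∞)` of `ℤ²` (indexed by `0,1,2`). -/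
def LambdaClass : Fin 3 → ℤ × ℤ → Prop
  | 0, u => Even u.1
  | 1, u => Even (u.1 + u.2)
  | 2, u => Even u.2

/-- A primitive vector cannot have both coordinates even. -/
lemma IsPrimitiveVec.not_both_even {v : ℤ × ℤ} (hv : IsPrimitiveVec v) :
    ¬ (Even v.1 ∧ Even v.2) := by
  rintro ⟨⟨k, hk⟩, ⟨m, hm⟩⟩
  exact hv.2 2 le_rfl (k, m) (by
    rw [Prod.ext_iff]
    constructor <;> simp [Prod.smul_def, smul_eq_mul] <;> omega)

/-- Lemma, part (ii), first assertion: if `P_S(x,v)` contains no vector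
of `ℤ²` other than `v` and `0`, then `P_B(x,v)` contains no primitive vector of
`Λ^(α)` other than `v`, `−v`, `0`. -/
theorem PB_no_primitive_Lambda_of_PS_trivial
    (x : ℝ) (hx : Irrational x) (α : Fin 3) (v : ℤ × ℤ)
    (hv : IsPrimitiveVec v) (hΛ : LambdaClass α v)
    (hS : ∀ u : ℤ × ℤ, MemPS x v u → u = v ∨ u = 0) :
    ∀ u : ℤ × ℤ, IsPrimitiveVec u → LambdaClass α u → MemPB x v u →
      u = v ∨ u = -v ∨ u = 0 := by
  intro u hu hΛu hB
  -- u ≡ v (mod 2) componentwise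
  have h2 : Even (u.1 + v.1) ∧ Even (u.2 + v.2) := by
    have hv' := hv.not_both_even
    have hu' := hu.not_both_even
    fin_cases α <;> simp only [LambdaClass] at hΛ hΛu <;>
      simp only [Int.even_iff] at hv' hu' hΛ hΛu ⊢ <;> omega
  obtain ⟨k, hk⟩ := h2.1
  obtain ⟨m, hm⟩ := h2.2
  obtain ⟨a, b, ha1, ha2, hb1, hb2, hu1, hu2⟩ := hB
  have hkR : (k : ℝ) + (k : ℝ) = (u.1 : ℝ) + (v.1 : ℝ) := by exact_mod_cast hk.symm
  have hmR : (m : ℝ) + (m : ℝ) = (u.2 : ℝ) + (v.2 : ℝ) := by exact_mod_cast hm.symm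
  -- (u+v)/2 = (k,m) lies in P_S
  have hw : MemPS x v (k, m) := by
    refine ⟨(a + 1) / 2, (b + 1) / 2, by linarith, by linarith, by linarith, by linarith, ?_, ?_⟩
    · linear_combination hu1 / 2 + hkR / 2
    · linear_combination hu2 / 2 + hmR / 2
  rcases hS (k, m) hw with h | h <;> rw [Prod.ext_iff] at h <;> simp only [Prod.fst_zero, Prod.snd_zero] at h
  · left
    rw [Prod.ext_iff]
    omega
  · right; left
    rw [Prod.ext_iff, Prod.fst_neg, Prod.snd_neg]
    omega
end

section
/- Let x be irrational and v ∈ Z² nonzero primitive. If P_S(x, v) contains no vector of Z² other than v and 0, then any two nonzero vectors u, u' of Z² lying in P_B(x, v), other than v and −v, are parallel: u = c·u' for some rational constant c. -/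
/-- Auxiliary: membership in the "mixed" region `a ∈ [-1,0)`, `b ∈ (0,1]`. -/
def InSAux (x : ℝ) (v u : ℤ × ℤ) : Prop :=
  ∃ a b : ℝ, -1 ≤ a ∧ a < 0 ∧ 0 < b ∧ b ≤ 1 ∧
    (u.1 : ℝ) = a * ((v.1 : ℝ) - (v.2 : ℝ) * x) + b * ((v.2 : ℝ) * x) ∧
    (u.2 : ℝ) = b * (v.2 : ℝ)

private lemma normalizeAux (x : ℝ) (v : ℤ × ℤ) (hq : (v.2 : ℝ) ≠ 0)
    (hS : ∀ u : ℤ × ℤ, MemPS x v u → u = v ∨ u = 0)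
    (u : ℤ × ℤ) (hu0 : u ≠ 0) (huv : u ≠ v) (hunv : u ≠ -v)
    (h : MemPB x v u) : InSAux x v u ∨ InSAux x v (-u) := by
  obtain ⟨a, b, ha1, ha2, hb1, hb2, e1, e2⟩ := h
  have en1 : ((-u).1 : ℝ) = (-a) * ((v.1 : ℝ) - (v.2 : ℝ) * x) + (-b) * ((v.2 : ℝ) * x) := by
    simp only [Prod.fst_neg]; push_cast; linear_combination -e1
  have en2 : ((-u).2 : ℝ) = (-b) * (v.2 : ℝ) := by
    simp only [Prod.snd_neg]; push_cast; linear_combination -e2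
  rcases lt_trichotomy b 0 with hb | hb | hb
  · -- b < 0 : look at -u
    rcases lt_or_ge 0 a with ha | ha
    · exact Or.inr ⟨-a, -b, by linarith, by linarith, by linarith, by linarith, en1, en2⟩
    · exfalso
      rcases hS (-u) ⟨-a, -b, by linarith, by linarith, by linarith, by linarith, en1, en2⟩ with h | h
      · exact hunv (by rw [← h]; simp)
      · exact hu0 (neg_eq_zero.mp h)
  · exfalso
    subst hb
    rcases le_or_gt 0 a with ha | ha
    · rcases hS u ⟨a, 0, ha, ha2, le_refl 0, by norm_num, e1, e2⟩ with h | h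
      · exact huv h
      · exact hu0 h
    · rcases hS (-u) ⟨-a, 0, by linarith, by linarith, le_refl 0, by norm_num,
        by rw [en1]; ring, by rw [en2]; ring⟩ with h | h
      · exact hunv (by rw [← h]; simp)
      · exact hu0 (neg_eq_zero.mp h)
  · -- b > 0
    rcases lt_or_ge a 0 with ha | ha
    · exact Or.inl ⟨a, b, ha1, ha, hb, hb2, e1, e2⟩
    · exfalso
      rcases hS u ⟨a, b, ha, ha2, by linarith, hb2, e1, e2⟩ with h | h
      · exact huv h
      · exact hu0 h

private lemma inS_sub (x : ℝ) (v : ℤ × ℤ) (hq : (v.2 : ℝ) ≠ 0)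
    (hS : ∀ u : ℤ × ℤ, MemPS x v u → u = v ∨ u = 0)
    (u u' : ℤ × ℤ) (a b a' b' : ℝ)
    (ha1 : -1 ≤ a) (ha2 : a < 0) (hb1 : 0 < b) (hb2 : b ≤ 1)
    (e1 : (u.1 : ℝ) = a * ((v.1 : ℝ) - (v.2 : ℝ) * x) + b * ((v.2 : ℝ) * x))
    (e2 : (u.2 : ℝ) = b * (v.2 : ℝ))
    (ha1' : -1 ≤ a') (ha2' : a' < 0) (hb1' : 0 < b') (hb2' : b' ≤ 1)
    (e1' : (u'.1 : ℝ) = a' * ((v.1 : ℝ) - (v.2 : ℝ) * x) + b' * ((v.2 : ℝ) * x))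
    (e2' : (u'.2 : ℝ) = b' * (v.2 : ℝ))
    (hlt : b < b') :
    InSAux x v (u' - u) ∧ (u' - u).2.natAbs < u'.2.natAbs := by
  have d1 : ((u' - u).1 : ℝ) = (a' - a) * ((v.1 : ℝ) - (v.2 : ℝ) * x)
      + (b' - b) * ((v.2 : ℝ) * x) := by
    simp only [Prod.fst_sub]; push_cast; linear_combination e1' - e1
  have d2 : ((u' - u).2 : ℝ) = (b' - b) * (v.2 : ℝ) := by
    simp only [Prod.snd_sub]; push_cast; linear_combination e2' - e2
  have hda : a' - a < 0 := by
    by_contra h0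
    push_neg at h0
    rcases hS (u' - u) ⟨a' - a, b' - b, h0, by linarith, by linarith, by linarith, d1, d2⟩
      with h | h
    · have h2 : ((u' - u).2 : ℝ) = (v.2 : ℝ) := by rw [h]
      rw [d2] at h2
      have : b' - b = 1 := by
        have := mul_right_cancel₀ hq (by linarith : (b' - b) * (v.2 : ℝ) = 1 * (v.2 : ℝ))
        linarith
      linarith
    · have h2 : ((u' - u).2 : ℝ) = 0 := by rw [h]; simp
      rw [d2] at h2
      rcases mul_eq_zero.mp h2 with h3 | h3
      · linarith
      · exact hq h3
  refine ⟨⟨a' - a, b' - b, by linarith, hda, by linarith, by linarith, d1, d2⟩, ?_⟩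
  have habs : |((u' - u).2 : ℝ)| < |(u'.2 : ℝ)| := by
    rw [d2, e2', abs_mul, abs_mul]
    have h1 : |b' - b| < |b'| := by
      rw [abs_of_pos (by linarith : (0:ℝ) < b' - b), abs_of_pos hb1']; linarith
    exact mul_lt_mul_of_pos_right h1 (abs_pos.mpr hq)
  have habs' : |(u' - u).2| < |u'.2| := by exact_mod_cast habs
  rw [Int.abs_eq_natAbs, Int.abs_eq_natAbs] at habs'
  exact_mod_cast habs'

private lemma inS_eq (x : ℝ) (v : ℤ × ℤ) (hq : (v.2 : ℝ) ≠ 0)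
    (hS : ∀ u : ℤ × ℤ, MemPS x v u → u = v ∨ u = 0)
    (u u' : ℤ × ℤ) (a b a' : ℝ)
    (ha1 : -1 ≤ a) (ha2 : a < 0)
    (e1 : (u.1 : ℝ) = a * ((v.1 : ℝ) - (v.2 : ℝ) * x) + b * ((v.2 : ℝ) * x))
    (e2 : (u.2 : ℝ) = b * (v.2 : ℝ))
    (ha1' : -1 ≤ a') (ha2' : a' < 0)
    (e1' : (u'.1 : ℝ) = a' * ((v.1 : ℝ) - (v.2 : ℝ) * x) + b * ((v.2 : ℝ) * x))
    (e2' : (u'.2 : ℝ) = b * (v.2 : ℝ)) :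
    u = u' := by
  have d1 : ((u' - u).1 : ℝ) = (a' - a) * ((v.1 : ℝ) - (v.2 : ℝ) * x)
      + 0 * ((v.2 : ℝ) * x) := by
    simp only [Prod.fst_sub]; push_cast; linear_combination e1' - e1
  have d2 : ((u' - u).2 : ℝ) = 0 * (v.2 : ℝ) := by
    simp only [Prod.snd_sub]; push_cast; linear_combination e2' - e2
  have d1n : ((u - u').1 : ℝ) = (a - a') * ((v.1 : ℝ) - (v.2 : ℝ) * x)
      + 0 * ((v.2 : ℝ) * x) := by
    simp only [Prod.fst_sub]; push_cast; linear_combination e1 - e1'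
  have d2n : ((u - u').2 : ℝ) = 0 * (v.2 : ℝ) := by
    simp only [Prod.snd_sub]; push_cast; linear_combination e2 - e2'
  rcases le_or_gt 0 (a' - a) with h0 | h0
  · rcases hS (u' - u) ⟨a' - a, 0, h0, by linarith, le_refl 0, by norm_num, d1, d2⟩ with h | h
    · exfalso
      have h2 : ((u' - u).2 : ℝ) = (v.2 : ℝ) := by rw [h]
      rw [d2] at h2
      exact hq (by linarith)
    · exact (sub_eq_zero.mp h).symm
  · rcases hS (u - u') ⟨a - a', 0, by linarith, by linarith, le_refl 0, by norm_num,
      d1n, d2n⟩ with h | h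
    · exfalso
      have h2 : ((u - u').2 : ℝ) = (v.2 : ℝ) := by rw [h]
      rw [d2n] at h2
      exact hq (by linarith)
    · exact sub_eq_zero.mp h

private lemma cross_zero (x : ℝ) (v : ℤ × ℤ) (hq : (v.2 : ℝ) ≠ 0)
    (hS : ∀ u : ℤ × ℤ, MemPS x v u → u = v ∨ u = 0) :
    ∀ n : ℕ, ∀ u u' : ℤ × ℤ, u.2.natAbs + u'.2.natAbs = n →
      InSAux x v u → InSAux x v u' → u.1 * u'.2 = u.2 * u'.1 := by
  intro n
  induction n using Nat.strong_induction_on with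
  | _ n ih =>
    intro u u' hn h h'
    obtain ⟨a, b, ha1, ha2, hb1, hb2, e1, e2⟩ := h
    obtain ⟨a', b', ha1', ha2', hb1', hb2', e1', e2'⟩ := h'
    rcases lt_trichotomy b b' with hlt | heq | hgt
    · obtain ⟨hΔ, hm⟩ := inS_sub x v hq hS u u' a b a' b' ha1 ha2 hb1 hb2 e1 e2
        ha1' ha2' hb1' hb2' e1' e2' hlt
      have := ih (u.2.natAbs + (u' - u).2.natAbs) (by omega) u (u' - u) rfl
        ⟨a, b, ha1, ha2, hb1, hb2, e1, e2⟩ hΔ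
      simp only [Prod.fst_sub, Prod.snd_sub] at this
      linear_combination this
    · subst heq
      have := inS_eq x v hq hS u u' a b a' ha1 ha2 e1 e2 ha1' ha2' e1' e2'
      rw [this]; ring
    · obtain ⟨hΔ, hm⟩ := inS_sub x v hq hS u' u a' b' a b ha1' ha2' hb1' hb2' e1' e2'
        ha1 ha2 hb1 hb2 e1 e2 hgt
      have := ih ((u - u').2.natAbs + u'.2.natAbs) (by omega) (u - u') u' rfl hΔ
        ⟨a', b', ha1', ha2', hb1', hb2', e1', e2'⟩
      simp only [Prod.fst_sub, Prod.snd_sub] at this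
      linear_combination this

/-- Lemma, part (ii), second assertion: if `P_S(x,v)` contains no vector
of `ℤ²` other than `v` and `0`, then any two nonzero vectors of `ℤ²` in `P_B(x,v)`
besides `v`, `−v` are parallel. -/
theorem PB_vectors_parallel_of_PS_trivial
    (x : ℝ) (hx : Irrational x) (v : ℤ × ℤ) (hv : IsPrimitiveVec v)
    (hS : ∀ u : ℤ × ℤ, MemPS x v u → u = v ∨ u = 0) :
    ∀ u u' : ℤ × ℤ, u ≠ 0 → u' ≠ 0 → u ≠ v → u ≠ -v → u' ≠ v → u' ≠ -v →
      MemPB x v u → MemPB x v u' →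
      ∃ c : ℚ, (u.1 : ℚ) = c * (u'.1 : ℚ) ∧ (u.2 : ℚ) = c * (u'.2 : ℚ) := by
  intro u u' hu0 hu'0 huv hunv hu'v hu'nv hPB hPB'
  by_cases hq0 : v.2 = 0
  · -- degenerate case: v = (±1, 0), no admissible u exists
    exfalso
    obtain ⟨hvne, hprim⟩ := hv
    have hv1 : v.1 = 1 ∨ v.1 = -1 := by
      by_contra hc
      push_neg at hc
      have h0 : v.1 ≠ 0 := fun h => hvne (Prod.ext_iff.mpr ⟨h, hq0⟩)
      rcases le_or_gt 2 v.1 with h | h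
      · exact hprim v.1 h (1, 0) (Prod.ext_iff.mpr ⟨by simp, by simp [hq0]⟩)
      · exact hprim (-v.1) (by omega) (-1, 0) (Prod.ext_iff.mpr ⟨by simp, by simp [hq0]⟩)
    obtain ⟨a, b, ha1, ha2, hb1, hb2, e1, e2⟩ := hPB
    have hq0' : ((v.2 : ℤ) : ℝ) = 0 := by exact_mod_cast congrArg (Int.cast : ℤ → ℝ) hq0
    have hu2 : u.2 = 0 := by
      have : (u.2 : ℝ) = 0 := by rw [e2, hq0']; ring
      exact_mod_cast this
    have he : (u.1 : ℝ) = a * (v.1 : ℝ) := by rw [e1, hq0']; ring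
    have hbound : -1 ≤ u.1 ∧ u.1 ≤ 1 := by
      have hv1r : ((v.1 : ℤ) : ℝ) = 1 ∨ ((v.1 : ℤ) : ℝ) = -1 := by
        rcases hv1 with h | h <;> [left; right] <;> rw [h] <;> norm_num
      have : -1 ≤ (u.1 : ℝ) ∧ (u.1 : ℝ) ≤ 1 := by
        rcases hv1r with h | h <;> rw [h] at he <;> constructor <;> linarith
      exact ⟨by exact_mod_cast this.1, by exact_mod_cast this.2⟩
    rcases (by omega : u.1 = 0 ∨ u.1 = 1 ∨ u.1 = -1) with h | h | h
    · exact hu0 (Prod.ext_iff.mpr ⟨h, hu2⟩)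
    · rcases hv1 with h1 | h1
      · exact huv (Prod.ext_iff.mpr ⟨by omega, by omega⟩)
      · exact hunv (Prod.ext_iff.mpr ⟨by simp; omega, by simp; omega⟩)
    · rcases hv1 with h1 | h1
      · exact hunv (Prod.ext_iff.mpr ⟨by simp; omega, by simp; omega⟩)
      · exact huv (Prod.ext_iff.mpr ⟨by omega, by omega⟩)
  · have hq : (v.2 : ℝ) ≠ 0 := by exact_mod_cast hq0
    -- normalize both vectors into the mixed region
    have hu'2 : u'.2 ≠ 0 := by
      obtain ⟨a, b, ha1, ha2, hb1, hb2, e1, e2⟩ := hPB'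
      rcases normalizeAux x v hq hS u' hu'0 hu'v hu'nv ⟨a, b, ha1, ha2, hb1, hb2, e1, e2⟩
        with h | h
      · obtain ⟨a', b', _, _, hb1', _, _, e2'⟩ := h
        intro h0
        rw [h0] at e2'
        push_cast at e2'
        rcases mul_eq_zero.mp (show b' * ((v.2:ℤ):ℝ) = 0 by linarith) with h3 | h3
        · linarith
        · exact hq h3
      · obtain ⟨a', b', _, _, hb1', _, _, e2'⟩ := h
        intro h0
        rw [show (-u').2 = -u'.2 from rfl, h0] at e2'
        push_cast at e2'
        rcases mul_eq_zero.mp (show b' * ((v.2:ℤ):ℝ) = 0 by linarith) with h3 | h3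
        · linarith
        · exact hq h3
    have cross : u.1 * u'.2 = u.2 * u'.1 := by
      rcases normalizeAux x v hq hS u hu0 huv hunv hPB with h | h <;>
      rcases normalizeAux x v hq hS u' hu'0 hu'v hu'nv hPB' with h' | h'
      · exact cross_zero x v hq hS _ u u' rfl h h'
      · have := cross_zero x v hq hS _ u (-u') rfl h h'
        simp only [Prod.fst_neg, Prod.snd_neg] at this
        linear_combination -this
      · have := cross_zero x v hq hS _ (-u) u' rfl h h'
        simp only [Prod.fst_neg, Prod.snd_neg] at this
        linear_combination -this
      · have := cross_zero x v hq hS _ (-u) (-u') rfl h h'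
        simp only [Prod.fst_neg, Prod.snd_neg] at this
        linear_combination this
    refine ⟨(u.2 : ℚ) / (u'.2 : ℚ), ?_, ?_⟩
    · have hcq : (u.1 : ℚ) * (u'.2 : ℚ) = (u.2 : ℚ) * (u'.1 : ℚ) := by exact_mod_cast cross
      have hq2 : (u'.2 : ℚ) ≠ 0 := Int.cast_ne_zero.mpr hu'2
      field_simp
      linear_combination hcq
    · have hq2 : (u'.2 : ℚ) ≠ 0 := Int.cast_ne_zero.mpr hu'2
      field_simp
end

section
/- For any irrational x and α ∈ {0, 1, ∞}, the set of best (α)-rational approximations of x equals the set of best signed approximations of x that lie in Q^(α): B^(α)(x) = S(x) ∩ Q^(α). -/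
/-- Parity classes of rationals (in lowest terms): `0` is even/odd, `1` is odd/odd,
`2` (for ∞) is odd/even. -/
def QParity : Fin 3 → ℚ → Prop
  | 0, r => Even r.num ∧ Odd (r.den : ℤ)
  | 1, r => Odd r.num ∧ Odd (r.den : ℤ)
  | 2, r => Odd r.num ∧ Even (r.den : ℤ)

/-- `r = p/q` is a best signed approximation of `x`. -/
def IsBestSignedApprox (x : ℝ) (r : ℚ) : Prop :=
  ∀ s : ℚ, s.den ≤ r.den → s ≠ r →
    Real.sign ((s.den : ℝ) * x - s.num) = Real.sign ((r.den : ℝ) * x - r.num) →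
    |(r.den : ℝ) * x - r.num| < |(s.den : ℝ) * x - s.num|

/-- `r` is a best `(α)`-rational approximation of `x`. -/
def IsBestClassApprox (α : Fin 3) (x : ℝ) (r : ℚ) : Prop :=
  QParity α r ∧ ∀ s : ℚ, QParity α s → s.den ≤ r.den → s ≠ r →
    |(r.den : ℝ) * x - r.num| < |(s.den : ℝ) * x - s.num|


private lemma lin_ne {x : ℝ} (hx : Irrational x) (n d : ℤ) (hd : d ≠ 0) :
    (d : ℝ) * x - n ≠ 0 := by
  intro h
  apply hx
  refine ⟨(n : ℚ) / (d : ℚ), ?_⟩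
  have hd' : (d : ℝ) ≠ 0 := Int.cast_ne_zero.2 hd
  push_cast
  field_simp
  linarith

private lemma err_inj {x : ℝ} (hx : Irrational x) {r s : ℚ}
    (h : (r.den : ℝ) * x - r.num = (s.den : ℝ) * x - s.num) : r = s := by
  by_cases hd : r.den = s.den
  · have h1 : (r.num : ℝ) = s.num := by rw [hd] at h; linarith
    exact Rat.ext (by exact_mod_cast h1) hd
  · exfalso
    apply hx
    refine ⟨((r.num : ℚ) - s.num) / ((r.den : ℚ) - s.den), ?_⟩
    have hdd : ((r.den : ℝ)) - s.den ≠ 0 := by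
      intro h0
      exact hd (by exact_mod_cast (by linarith : (r.den : ℝ) = s.den))
    push_cast
    field_simp
    linarith

private lemma not_even_even (r : ℚ) : ¬ (Even r.num ∧ Even (r.den : ℤ)) := by
  rintro ⟨h1, h2⟩
  have h3 : (2 : ℕ) ∣ r.num.natAbs := by
    have := Int.even_iff.1 h1; omega
  have h4 : (2 : ℕ) ∣ r.den := by
    have := Int.even_iff.1 h2; omega
  have h5 := Nat.dvd_gcd h3 h4
  rw [r.reduced] at h5
  omega

private lemma rat_eq_of_cross {r s : ℚ} (h : s.num * (r.den : ℤ) = r.num * s.den) : s = r := by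
  have hs : ((s.den : ℚ)) ≠ 0 := by exact_mod_cast s.den_ne_zero
  have hr : ((r.den : ℚ)) ≠ 0 := by exact_mod_cast r.den_ne_zero
  rw [← Rat.num_div_den s, ← Rat.num_div_den r, div_eq_div_iff hs hr]
  exact_mod_cast h


private lemma construct (x : ℝ) (n d : ℤ) (hd : 0 < d) :
    ∃ t : ℚ, (t.den : ℤ) ≤ d ∧
      (∃ c : ℝ, 0 < c ∧ c ≤ 1 ∧ (t.den : ℝ) * x - t.num = c * ((d : ℝ) * x - n)) ∧
      (¬ (Even n ∧ Even d) → ((Odd t.num ↔ Odd n) ∧ (Odd (t.den : ℤ) ↔ Odd d))) ∧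
      (∀ r : ℚ, t = r → n * (r.den : ℤ) = r.num * d) := by
  set t : ℚ := (n : ℚ) / (d : ℚ) with ht
  have hdQ : (d : ℚ) ≠ 0 := Int.cast_ne_zero.2 hd.ne'
  have hdvd : (t.den : ℤ) ∣ d := by
    rw [ht, ← Rat.divInt_eq_div]; exact Rat.den_dvd n d
  have htden : (0 : ℤ) < t.den := by exact_mod_cast t.pos
  have hle : (t.den : ℤ) ≤ d := Int.le_of_dvd hd hdvd
  obtain ⟨g, hg⟩ := hdvd
  have hgpos : 0 < g := by nlinarith
  -- cross multiplication: t.num * d = n * t.den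
  have hcross : t.num * d = n * t.den := by
    have h1 : (t.num : ℚ) / t.den = (n : ℚ) / d := by rw [Rat.num_div_den]
    have hs : ((t.den : ℚ)) ≠ 0 := by exact_mod_cast t.den_ne_zero
    rw [div_eq_div_iff hs hdQ] at h1
    exact_mod_cast h1
  have hn : n = t.num * g := by
    have : t.num * ((t.den : ℤ) * g) = n * t.den := by rw [← hg]; exact hcross
    have h2 : (t.num * g) * t.den = n * t.den := by ring_nf; ring_nf at this; linarith [this]
    exact (mul_right_cancel₀ htden.ne' h2).symm
  refine ⟨t, hle, ?_, ?_, ?_⟩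
  · refine ⟨(t.den : ℝ) / d, by positivity, ?_, ?_⟩
    · rw [div_le_one (by exact_mod_cast hd)]
      exact_mod_cast hle
    · have hdR : (d : ℝ) ≠ 0 := Int.cast_ne_zero.2 hd.ne'
      have hkey : (t.num : ℝ) * d = n * t.den := by exact_mod_cast hcross
      field_simp
      nlinarith [hkey]
  · intro hne
    have hgo : Odd g := by
      rcases Int.even_or_odd g with he | ho
      · exfalso
        apply hne
        constructor
        · rw [hn]; exact he.mul_left _
        · rw [hg]; exact he.mul_left _
      · exact ho
    constructor
    · rw [hn, Int.odd_mul]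
      simp [hgo]
    · rw [hg, Int.odd_mul]
      simp [hgo]
  · intro r hr
    have h1 : (n : ℚ) / d = (r.num : ℚ) / r.den := by rw [← ht, hr, Rat.num_div_den]
    have hs : ((r.den : ℚ)) ≠ 0 := by exact_mod_cast r.den_ne_zero
    rw [div_eq_div_iff hdQ hs] at h1
    exact_mod_cast h1

private lemma sign_eq_iff {u v : ℝ} (hu : u ≠ 0) (hv : v ≠ 0) :
    Real.sign u = Real.sign v ↔ (0 < u ∧ 0 < v) ∨ (u < 0 ∧ v < 0) := by
  constructor
  · intro he
    rcases hu.lt_or_gt with h | h <;> rcases hv.lt_or_gt with h' | h'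
    · exact Or.inr ⟨h, h'⟩
    · rw [Real.sign_of_neg h, Real.sign_of_pos h'] at he; norm_num at he
    · rw [Real.sign_of_pos h, Real.sign_of_neg h'] at he; norm_num at he
    · exact Or.inl ⟨h, h'⟩
  · rintro (⟨h1, h2⟩ | ⟨h1, h2⟩)
    · rw [Real.sign_of_pos h1, Real.sign_of_pos h2]
    · rw [Real.sign_of_neg h1, Real.sign_of_neg h2]

private lemma qparity_transfer {α : Fin 3} {t r : ℚ} (h : QParity α r)
    (hn : Odd t.num ↔ Odd r.num) (hd : Odd (t.den : ℤ) ↔ Odd (r.den : ℤ)) :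
    QParity α t := by
  fin_cases α <;>
    simp only [QParity, ← Int.not_odd_iff_even] at h ⊢ <;>
    tauto

private lemma qparity_congr {α : Fin 3} {s r : ℚ} (hs : QParity α s) (hr : QParity α r) :
    (Odd s.num ↔ Odd r.num) ∧ (Odd (s.den : ℤ) ↔ Odd (r.den : ℤ)) := by
  fin_cases α <;>
    simp only [QParity, ← Int.not_odd_iff_even] at hs hr <;>
    tauto

private lemma beat (x : ℝ) (r : ℚ) (n d : ℤ) (hd : 0 < d) (hdle : d ≤ (r.den : ℤ))
    (hne : n * (r.den : ℤ) ≠ r.num * d) :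
    ∃ t : ℚ, t.den ≤ r.den ∧ t ≠ r ∧
      |(t.den : ℝ) * x - t.num| ≤ |(d : ℝ) * x - n| ∧
      (0 < (d : ℝ) * x - n → 0 < (t.den : ℝ) * x - t.num) ∧
      ((d : ℝ) * x - n < 0 → (t.den : ℝ) * x - t.num < 0) ∧
      (¬ (Even n ∧ Even d) → ((Odd t.num ↔ Odd n) ∧ (Odd (t.den : ℤ) ↔ Odd d))) := by
  obtain ⟨t, hle, ⟨c, hc0, hc1, hcerr⟩, hpar, hcr⟩ := construct x n d hd
  refine ⟨t, ?_, ?_, ?_, ?_, ?_, hpar⟩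
  · exact_mod_cast hle.trans hdle
  · intro h; exact hne (hcr r h)
  · rw [hcerr, abs_mul, abs_of_pos hc0]
    nlinarith [abs_nonneg ((d : ℝ) * x - n)]
  · intro h; rw [hcerr]; positivity
  · intro h; rw [hcerr]; exact mul_neg_of_pos_of_neg hc0 h

private lemma err_ne_zero {x : ℝ} (hx : Irrational x) (r : ℚ) :
    (r.den : ℝ) * x - r.num ≠ 0 := by
  have h := lin_ne hx r.num (r.den : ℤ) (by exact_mod_cast r.den_ne_zero)
  push_cast at h ⊢
  exact h

private lemma denZ_pos (r : ℚ) : (0 : ℤ) < (r.den : ℤ) := by exact_mod_cast r.pos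

private lemma bestSigned_abs_lt_one {x : ℝ} (hx : Irrational x) {r : ℚ}
    (h : IsBestSignedApprox x r) : |(r.den : ℝ) * x - r.num| < 1 := by
  set er := (r.den : ℝ) * x - r.num with herdef
  by_contra hcon
  push_neg at hcon
  have her0 : er ≠ 0 := err_ne_zero hx r
  have hqpos := denZ_pos r
  rcases her0.lt_or_gt with hneg | hpos
  · -- er < 0 : use n = r.num - 1
    have hX : ((r.den : ℤ) : ℝ) * x - ((r.num - 1 : ℤ) : ℝ) = er + 1 := by
      rw [herdef]; push_cast; ring
    have hcr : (r.num - 1) * (r.den : ℤ) ≠ r.num * (r.den : ℤ) := by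
      intro hE; nlinarith [hE]
    obtain ⟨t, htden, htne, htabs, _, htneg, _⟩ :=
      beat x r (r.num - 1) (r.den : ℤ) hqpos le_rfl hcr
    have herlt : er < -1 := by
      have h1 : er ≤ -1 := by rw [abs_of_neg hneg] at hcon; linarith
      rcases h1.lt_or_eq with h2 | h2
      · exact h2
      · exact absurd (by rw [hX, h2]; ring) (lin_ne hx (r.num - 1) (r.den : ℤ) hqpos.ne')
    have hXneg : ((r.den : ℤ) : ℝ) * x - ((r.num - 1 : ℤ) : ℝ) < 0 := by rw [hX]; linarith
    have htneg' := htneg hXneg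
    have hsg : Real.sign ((t.den : ℝ) * x - t.num) = Real.sign er :=
      (sign_eq_iff htneg'.ne her0).2 (Or.inr ⟨htneg', hneg⟩)
    have hfin := h t htden htne hsg
    rw [hX] at htabs
    rw [abs_of_neg hneg] at hfin
    rw [abs_of_neg (by linarith : er + 1 < 0)] at htabs
    have := abs_nonneg ((t.den : ℝ) * x - t.num)
    linarith [le_abs_self ((t.den : ℝ) * x - t.num), neg_abs_le ((t.den : ℝ) * x - t.num)]
  · -- 0 < er : use n = r.num + 1
    have hX : ((r.den : ℤ) : ℝ) * x - ((r.num + 1 : ℤ) : ℝ) = er - 1 := by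
      rw [herdef]; push_cast; ring
    have hcr : (r.num + 1) * (r.den : ℤ) ≠ r.num * (r.den : ℤ) := by
      intro hE; nlinarith [hE]
    obtain ⟨t, htden, htne, htabs, htpos, _, _⟩ :=
      beat x r (r.num + 1) (r.den : ℤ) hqpos le_rfl hcr
    have hergt : 1 < er := by
      have h1 : 1 ≤ er := by rw [abs_of_pos hpos] at hcon; linarith
      rcases h1.lt_or_eq with h2 | h2
      · exact h2
      · exact absurd (by rw [hX, ← h2]; ring) (lin_ne hx (r.num + 1) (r.den : ℤ) hqpos.ne')
    have hXpos : 0 < ((r.den : ℤ) : ℝ) * x - ((r.num + 1 : ℤ) : ℝ) := by rw [hX]; linarith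
    have htpos' := htpos hXpos
    have hsg : Real.sign ((t.den : ℝ) * x - t.num) = Real.sign er :=
      (sign_eq_iff htpos'.ne' her0).2 (Or.inl ⟨htpos', hpos⟩)
    have hfin := h t htden htne hsg
    rw [hX] at htabs
    rw [abs_of_pos hpos] at hfin
    rw [abs_of_pos (by linarith : (0:ℝ) < er - 1)] at htabs
    linarith [le_abs_self ((t.den : ℝ) * x - t.num), neg_abs_le ((t.den : ℝ) * x - t.num)]

private lemma bestClass_abs_lt_one {x : ℝ} (hx : Irrational x) {α : Fin 3} {r : ℚ}
    (h : IsBestClassApprox α x r) : |(r.den : ℝ) * x - r.num| < 1 := by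
  set er := (r.den : ℝ) * x - r.num with herdef
  by_contra hcon
  push_neg at hcon
  have her0 : er ≠ 0 := err_ne_zero hx r
  have hqpos := denZ_pos r
  have hP := h.1
  have hnee := not_even_even r
  rcases her0.lt_or_gt with hneg | hpos
  · have hX : ((r.den : ℤ) : ℝ) * x - ((r.num - 2 : ℤ) : ℝ) = er + 2 := by
      rw [herdef]; push_cast; ring
    have hcr : (r.num - 2) * (r.den : ℤ) ≠ r.num * (r.den : ℤ) := by
      intro hE; nlinarith [hE]
    obtain ⟨t, htden, htne, htabs, _, _, hpar⟩ :=
      beat x r (r.num - 2) (r.den : ℤ) hqpos le_rfl hcr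
    have hparh : ¬ (Even (r.num - 2) ∧ Even (r.den : ℤ)) := by
      intro ⟨h1, h2⟩
      exact hnee ⟨by rcases h1 with ⟨k, hk⟩; exact ⟨k + 1, by omega⟩, h2⟩
    obtain ⟨hpn, hpd⟩ := hpar hparh
    have htP : QParity α t := qparity_transfer hP
      (by rw [hpn, Int.odd_iff, Int.odd_iff]; omega) hpd
    have herlt : er < -1 := by
      have h1 : er ≤ -1 := by rw [abs_of_neg hneg] at hcon; linarith
      rcases h1.lt_or_eq with h2 | h2
      · exact h2
      · exact absurd (by rw [herdef] at h2; push_cast; linarith :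
          ((r.den : ℤ) : ℝ) * x - ((r.num - 1 : ℤ) : ℝ) = 0)
          (lin_ne hx (r.num - 1) (r.den : ℤ) hqpos.ne')
    have hfin := h.2 t htP htden htne
    rw [hX] at htabs
    rw [abs_of_neg hneg] at hfin
    have habs2 : |er + 2| < -er := by
      rw [abs_lt]; constructor <;> linarith
    linarith [le_abs_self ((t.den : ℝ) * x - t.num), neg_abs_le ((t.den : ℝ) * x - t.num)]
  · have hX : ((r.den : ℤ) : ℝ) * x - ((r.num + 2 : ℤ) : ℝ) = er - 2 := by
      rw [herdef]; push_cast; ring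
    have hcr : (r.num + 2) * (r.den : ℤ) ≠ r.num * (r.den : ℤ) := by
      intro hE; nlinarith [hE]
    obtain ⟨t, htden, htne, htabs, _, _, hpar⟩ :=
      beat x r (r.num + 2) (r.den : ℤ) hqpos le_rfl hcr
    have hparh : ¬ (Even (r.num + 2) ∧ Even (r.den : ℤ)) := by
      intro ⟨h1, h2⟩
      exact hnee ⟨by rcases h1 with ⟨k, hk⟩; exact ⟨k - 1, by omega⟩, h2⟩
    obtain ⟨hpn, hpd⟩ := hpar hparh
    have htP : QParity α t := qparity_transfer hP
      (by rw [hpn, Int.odd_iff, Int.odd_iff]; omega) hpd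
    have hergt : 1 < er := by
      have h1 : 1 ≤ er := by rw [abs_of_pos hpos] at hcon; linarith
      rcases h1.lt_or_eq with h2 | h2
      · exact h2
      · exact absurd (by rw [herdef] at h2; push_cast; linarith :
          ((r.den : ℤ) : ℝ) * x - ((r.num + 1 : ℤ) : ℝ) = 0)
          (lin_ne hx (r.num + 1) (r.den : ℤ) hqpos.ne')
    have hfin := h.2 t htP htden htne
    rw [hX] at htabs
    rw [abs_of_pos hpos] at hfin
    have habs2 : |er - 2| < er := by
      rw [abs_lt]; constructor <;> linarith
    linarith [le_abs_self ((t.den : ℝ) * x - t.num), neg_abs_le ((t.den : ℝ) * x - t.num)]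

/-- Theorem 1 (i): `B^(α)(x) = S(x) ∩ Q^(α)`. -/
theorem bestClassApprox_eq_bestSigned_inter_parity (x : ℝ) (hx : Irrational x) (α : Fin 3) :
    {r : ℚ | IsBestClassApprox α x r} =
      {r : ℚ | IsBestSignedApprox x r} ∩ {r : ℚ | QParity α r} := by
  ext r
  simp only [Set.mem_setOf_eq, Set.mem_inter_iff]
  constructor
  · rintro ⟨hP, hB⟩
    refine ⟨?_, hP⟩
    intro s hden hne hsign
    by_contra hcon
    push_neg at hcon
    set er := (r.den : ℝ) * x - r.num with herdef
    set es := (s.den : ℝ) * x - s.num with hesdef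
    have her0 : er ≠ 0 := err_ne_zero hx r
    have hes0 : es ≠ 0 := err_ne_zero hx s
    have hss := (sign_eq_iff hes0 her0).1 hsign
    have hnes : es ≠ er := by
      intro hE
      exact hne (err_inj hx hE)
    have habs : |es| < |er| := by
      rcases lt_or_eq_of_le hcon with h1 | h1
      · exact h1
      · exfalso; apply hnes
        rcases hss with ⟨h2, h3⟩ | ⟨h2, h3⟩
        · rw [abs_of_pos h2, abs_of_pos h3] at h1; linarith
        · rw [abs_of_neg h2, abs_of_neg h3] at h1; linarith
    have her1 : |er| < 1 := bestClass_abs_lt_one hx ⟨hP, hB⟩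
    have hkey : |er - 2 * es| < |er| := by
      rcases hss with ⟨h2, h3⟩ | ⟨h2, h3⟩
      · rw [abs_of_pos h2, abs_of_pos h3] at habs
        rw [abs_of_pos h3, abs_lt]; constructor <;> linarith
      · rw [abs_of_neg h2, abs_of_neg h3] at habs
        rw [abs_of_neg h3, abs_lt]; constructor <;> linarith
    have sdpos := denZ_pos s
    have rdpos := denZ_pos r
    have hcross_sr : s.num * (r.den : ℤ) ≠ r.num * s.den := by
      intro hE; exact hne (rat_eq_of_cross hE)
    rcases lt_trichotomy (2 * (s.den : ℤ)) (r.den : ℤ) with hlt | heq | hgt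
    · -- 2b < q : use vector (p - 2a, q - 2b)
      have hd : (0 : ℤ) < (r.den : ℤ) - 2 * (s.den : ℤ) := by omega
      have hdle : (r.den : ℤ) - 2 * (s.den : ℤ) ≤ (r.den : ℤ) := by omega
      have hcr : (r.num - 2 * s.num) * (r.den : ℤ) ≠ r.num * ((r.den : ℤ) - 2 * (s.den : ℤ)) := by
        intro hE
        apply hcross_sr
        have h2 : 2 * (s.num * (r.den : ℤ)) = 2 * (r.num * s.den) := by ring_nf; ring_nf at hE; linarith
        exact mul_left_cancel₀ (by norm_num : (2:ℤ) ≠ 0) h2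
      obtain ⟨t, htden, htne, htabs, _, _, hpar⟩ :=
        beat x r (r.num - 2 * s.num) ((r.den : ℤ) - 2 * (s.den : ℤ)) hd hdle hcr
      have hX : (((r.den : ℤ) - 2 * (s.den : ℤ) : ℤ) : ℝ) * x - ((r.num - 2 * s.num : ℤ) : ℝ)
          = er - 2 * es := by
        rw [herdef, hesdef]; push_cast; ring
      have hparh : ¬ (Even (r.num - 2 * s.num) ∧ Even ((r.den : ℤ) - 2 * (s.den : ℤ))) := by
        rintro ⟨⟨k, hk⟩, ⟨m, hm⟩⟩
        exact not_even_even r ⟨⟨k + s.num, by omega⟩, ⟨m + s.den, by omega⟩⟩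
      obtain ⟨hpn, hpd⟩ := hpar hparh
      have htP : QParity α t := qparity_transfer hP
        (by rw [hpn, Int.odd_iff, Int.odd_iff]; omega)
        (by rw [hpd, Int.odd_iff, Int.odd_iff]; omega)
      have hfin := hB t htP htden htne
      rw [hX] at htabs
      linarith
    · -- 2b = q : contradiction with coprimality
      have hXint : er - 2 * es = ((2 * s.num - r.num : ℤ) : ℝ) := by
        rw [herdef, hesdef]
        have hc : ((r.den : ℕ) : ℝ) = 2 * ((s.den : ℕ) : ℝ) := by exact_mod_cast heq.symm
        rw [hc]; push_cast; ring
      have hbnd : |((2 * s.num - r.num : ℤ) : ℝ)| < 1 := by rw [← hXint]; linarith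
      have hz : 2 * s.num - r.num = 0 := by
        have h1 := abs_lt.1 hbnd
        have h2 : -1 < 2 * s.num - r.num := by exact_mod_cast h1.1
        have h3 : 2 * s.num - r.num < 1 := by exact_mod_cast h1.2
        omega
      exact not_even_even r ⟨⟨s.num, by omega⟩, ⟨(s.den : ℤ), by omega⟩⟩
    · -- 2b > q : use vector (2a - p, 2b - q)
      have hbq : (s.den : ℤ) ≤ (r.den : ℤ) := by exact_mod_cast hden
      have hd : (0 : ℤ) < 2 * (s.den : ℤ) - (r.den : ℤ) := by omega
      have hdle : 2 * (s.den : ℤ) - (r.den : ℤ) ≤ (r.den : ℤ) := by omega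
      have hcr : (2 * s.num - r.num) * (r.den : ℤ) ≠ r.num * (2 * (s.den : ℤ) - (r.den : ℤ)) := by
        intro hE
        apply hcross_sr
        have h2 : 2 * (s.num * (r.den : ℤ)) = 2 * (r.num * s.den) := by ring_nf; ring_nf at hE; linarith
        exact mul_left_cancel₀ (by norm_num : (2:ℤ) ≠ 0) h2
      obtain ⟨t, htden, htne, htabs, _, _, hpar⟩ :=
        beat x r (2 * s.num - r.num) (2 * (s.den : ℤ) - (r.den : ℤ)) hd hdle hcr
      have hX : ((2 * (s.den : ℤ) - (r.den : ℤ) : ℤ) : ℝ) * x - ((2 * s.num - r.num : ℤ) : ℝ)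
          = 2 * es - er := by
        rw [herdef, hesdef]; push_cast; ring
      have hparh : ¬ (Even (2 * s.num - r.num) ∧ Even (2 * (s.den : ℤ) - (r.den : ℤ))) := by
        rintro ⟨⟨k, hk⟩, ⟨m, hm⟩⟩
        exact not_even_even r ⟨⟨s.num - k, by omega⟩, ⟨s.den - m, by omega⟩⟩
      obtain ⟨hpn, hpd⟩ := hpar hparh
      have htP : QParity α t := qparity_transfer hP
        (by rw [hpn, Int.odd_iff, Int.odd_iff]; omega)
        (by rw [hpd, Int.odd_iff, Int.odd_iff]; omega)
      have hfin := hB t htP htden htne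
      rw [hX] at htabs
      rw [abs_sub_comm] at hkey
      linarith
  · rintro ⟨hS, hP⟩
    refine ⟨hP, ?_⟩
    intro s hPs hden hne
    set er := (r.den : ℝ) * x - r.num with herdef
    set es := (s.den : ℝ) * x - s.num with hesdef
    have her0 : er ≠ 0 := err_ne_zero hx r
    have hes0 : es ≠ 0 := err_ne_zero hx s
    by_cases hsig : Real.sign es = Real.sign er
    · exact hS s hden hne hsig
    by_contra hcon
    push_neg at hcon
    have hopp : (0 < es ∧ er < 0) ∨ (es < 0 ∧ 0 < er) := by
      rcases hes0.lt_or_gt with h1 | h1 <;> rcases her0.lt_or_gt with h2 | h2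
      · exact absurd ((sign_eq_iff hes0 her0).2 (Or.inr ⟨h1, h2⟩)) hsig
      · exact Or.inr ⟨h1, h2⟩
      · exact Or.inl ⟨h1, h2⟩
      · exact absurd ((sign_eq_iff hes0 her0).2 (Or.inl ⟨h1, h2⟩)) hsig
    have her1 : |er| < 1 := bestSigned_abs_lt_one hx hS
    have hes1 : |es| < 1 := lt_of_le_of_lt hcon her1
    obtain ⟨hnum, hdenp⟩ := qparity_congr hPs hP
    have hevn : Even (r.num - s.num) := by
      rw [Int.odd_iff, Int.odd_iff] at hnum
      rw [Int.even_iff]; omega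
    have hevd : Even ((r.den : ℤ) - (s.den : ℤ)) := by
      rw [Int.odd_iff, Int.odd_iff] at hdenp
      rw [Int.even_iff]; omega
    rcases lt_or_eq_of_le hden with hlt | heqden
    · -- b < q
      obtain ⟨n', hn'⟩ := hevn
      obtain ⟨d', hd'⟩ := hevd
      have hblt : (s.den : ℤ) < (r.den : ℤ) := by exact_mod_cast hlt
      have sdpos := denZ_pos s
      have hd'pos : 0 < d' := by omega
      have hd'le : d' ≤ (r.den : ℤ) := by omega
      have hc1 : ((r.den : ℕ) : ℝ) = ((s.den : ℕ) : ℝ) + 2 * (d' : ℝ) := by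
        have : (r.den : ℤ) = (s.den : ℤ) + 2 * d' := by omega
        exact_mod_cast this
      have hc2 : ((r.num : ℤ) : ℝ) = ((s.num : ℤ) : ℝ) + 2 * (n' : ℝ) := by
        have : r.num = s.num + 2 * n' := by omega
        exact_mod_cast this
      have hX : ((d' : ℤ) : ℝ) * x - ((n' : ℤ) : ℝ) = (er - es) / 2 := by
        rw [herdef, hesdef, hc1, hc2]; ring
      have hcr : n' * (r.den : ℤ) ≠ r.num * d' := by
        intro hE
        apply hne
        apply rat_eq_of_cross
        have h2 : (r.num - s.num) * (r.den : ℤ) = r.num * ((r.den : ℤ) - (s.den : ℤ)) := by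
          rw [hn', hd']; ring_nf; ring_nf at hE; linarith
        ring_nf at h2; linarith
      obtain ⟨t, htden, htne, htabs, htpos, htneg, _⟩ := beat x r n' d' hd'pos hd'le hcr
      have hsg : Real.sign ((t.den : ℝ) * x - t.num) = Real.sign er := by
        rcases hopp with ⟨h1, h2⟩ | ⟨h1, h2⟩
        · have hXneg : ((d' : ℤ) : ℝ) * x - ((n' : ℤ) : ℝ) < 0 := by rw [hX]; linarith
          have ht := htneg hXneg
          exact (sign_eq_iff ht.ne her0).2 (Or.inr ⟨ht, h2⟩)
        · have hXpos : 0 < ((d' : ℤ) : ℝ) * x - ((n' : ℤ) : ℝ) := by rw [hX]; linarith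
          have ht := htpos hXpos
          exact (sign_eq_iff ht.ne' her0).2 (Or.inl ⟨ht, h2⟩)
      have hfin := hS t htden htne hsg
      rw [hX] at htabs
      have hb : |(er - es) / 2| ≤ |er| := by
        have h3 := abs_sub er es
        rw [abs_div, abs_two]
        linarith
      rw [← herdef] at hfin
      linarith
    · -- b = q
      have heqz : (s.den : ℤ) = (r.den : ℤ) := by exact_mod_cast heqden
      have hXint : er - es = ((s.num - r.num : ℤ) : ℝ) := by
        rw [herdef, hesdef]
        have hc : ((s.den : ℕ) : ℝ) = ((r.den : ℕ) : ℝ) := by exact_mod_cast heqz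
        rw [hc]; push_cast; ring
      have hbnd : |((s.num - r.num : ℤ) : ℝ)| < 2 := by
        rw [← hXint]
        calc |er - es| ≤ |er| + |es| := abs_sub er es
        _ < 2 := by linarith
      have h1 := abs_lt.1 hbnd
      have h2 : -2 < s.num - r.num := by exact_mod_cast h1.1
      have h3 : s.num - r.num < 2 := by exact_mod_cast h1.2
      rw [Int.even_iff] at hevn
      have hz : s.num = r.num := by omega
      exact hne (Rat.ext hz heqden)
end

section
/- For any irrational x, the set of best signed approximations of x is the disjoint union of the sets of best (0)-, (1)-, and (∞)-rational approximations: S(x) = B^(0)(x) ⊔ B^(1)(x) ⊔ B^(∞)(x). -/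
namespace BSAproof

/-- parity classes for integer pairs -/
def PP : Fin 3 → ℤ → ℤ → Prop
  | 0, n, d => Even n ∧ Odd d
  | 1, n, d => Odd n ∧ Odd d
  | 2, n, d => Odd n ∧ Even d

lemma fin3 (α : Fin 3) : α = 0 ∨ α = 1 ∨ α = 2 := by omega

lemma QParity_iff (α : Fin 3) (r : ℚ) : QParity α r ↔ PP α r.num (r.den : ℤ) := by
  rcases fin3 α with rfl | rfl | rfl <;> exact Iff.rfl

lemma PP_emod (α : Fin 3) (n d : ℤ) :
    PP α n d ↔ (n % 2, d % 2) = (if α = 0 then 0 else 1, if α = 2 then 0 else 1) := by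
  rcases fin3 α with rfl | rfl | rfl <;>
    simp [PP, Int.even_iff, Int.odd_iff, Prod.ext_iff]

lemma not_both_even (r : ℚ) : ¬ (r.num % 2 = 0 ∧ (r.den : ℤ) % 2 = 0) := by
  rintro ⟨h1, h2⟩
  have hc := r.reduced
  have d1 : 2 ∣ r.num.natAbs := by omega
  have d2 : 2 ∣ r.den := by omega
  have := Nat.dvd_gcd d1 d2
  rw [hc] at this
  omega

lemma exists_parity (r : ℚ) : ∃ α : Fin 3, QParity α r := by
  have h := not_both_even r
  rcases Int.even_or_odd r.num with h1 | h1 <;> rcases Int.even_or_odd (r.den : ℤ) with h2 | h2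
  · rw [Int.even_iff] at h1 h2; exact absurd ⟨h1, h2⟩ h
  · exact ⟨0, h1, h2⟩
  · exact ⟨2, h1, h2⟩
  · exact ⟨1, h1, h2⟩

lemma unique_parity {α β : Fin 3} {r : ℚ} (h1 : QParity α r) (h2 : QParity β r) : α = β := by
  rw [QParity_iff] at h1 h2
  rcases fin3 α with rfl | rfl | rfl <;> rcases fin3 β with rfl | rfl | rfl <;> try rfl
  all_goals {
    exfalso
    obtain ⟨a1, a2⟩ := h1
    obtain ⟨b1, b2⟩ := h2
    simp only [Int.even_iff, Int.odd_iff] at a1 a2 b1 b2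
    omega }

lemma lin_ne {x : ℝ} (hx : Irrational x) {n d : ℤ} (hd : d ≠ 0) :
    (d : ℝ) * x - n ≠ 0 := by
  intro h
  apply hx
  refine ⟨(n : ℚ) / (d : ℚ), ?_⟩
  have hd' : (d : ℝ) ≠ 0 := Int.cast_ne_zero.mpr hd
  push_cast
  field_simp
  linarith

lemma th_ne {x : ℝ} (hx : Irrational x) (r : ℚ) : (r.den : ℝ) * x - r.num ≠ 0 := by
  have h : ((r.den : ℤ) : ℝ) * x - r.num ≠ 0 := lin_ne hx (by exact_mod_cast r.den_nz)
  exact_mod_cast h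

lemma th_inj {x : ℝ} (hx : Irrational x) {r s : ℚ}
    (h : (r.den : ℝ) * x - r.num = (s.den : ℝ) * x - s.num) : r = s := by
  by_cases hd : r.den = s.den
  · have : (r.num : ℝ) = s.num := by rw [hd] at h; linarith
    exact Rat.ext (by exact_mod_cast this) hd
  · exfalso
    apply lin_ne hx (n := r.num - s.num) (d := (r.den : ℤ) - (s.den : ℤ))
    · intro hc; apply hd; omega
    · push_cast; linarith
lemma reduce (n d : ℤ) (hd : 0 < d) :
    ∃ (q : ℚ) (g : ℤ), 0 < g ∧ (q.den : ℤ) * g = d ∧ q.num * g = n := by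
  set q : ℚ := (n : ℚ) / (d : ℚ) with hq
  have hdvd : ((q.den : ℤ)) ∣ d := by
    rw [hq, ← Rat.divInt_eq_div]; exact Rat.den_dvd n d
  obtain ⟨g, hg⟩ := hdvd
  have hden0 : (0 : ℤ) < (q.den : ℤ) := by exact_mod_cast q.pos
  have hgpos : 0 < g := by nlinarith
  refine ⟨q, g, hgpos, hg.symm, ?_⟩
  have hd0 : (d : ℚ) ≠ 0 := by exact_mod_cast hd.ne'
  have hnum : (q.num : ℚ) * d = n * q.den := by
    have h1 : (q.num : ℚ) / (q.den : ℚ) = (n : ℚ) / (d : ℚ) := by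
      rw [Rat.num_div_den q]
    field_simp at h1
    linarith
  have hnumZ : q.num * d = n * (q.den : ℤ) := by exact_mod_cast hnum
  have h5 : (q.den : ℤ) * (q.num * g) = (q.den : ℤ) * n :=
    calc (q.den : ℤ) * (q.num * g) = q.num * ((q.den : ℤ) * g) := by ring
      _ = q.num * d := by rw [← hg]
      _ = n * (q.den : ℤ) := hnumZ
      _ = (q.den : ℤ) * n := by ring
  exact mul_left_cancel₀ hden0.ne' h5

lemma mul_odd_emod (a g : ℤ) (hg : g % 2 = 1) : (a * g) % 2 = a % 2 := by
  rw [Int.mul_emod, hg, mul_one]; omega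

lemma PP_not_both_even {α : Fin 3} {n d : ℤ} (h : PP α n d) : ¬ (n % 2 = 0 ∧ d % 2 = 0) := by
  rcases fin3 α with rfl | rfl | rfl <;>
    · obtain ⟨a1, a2⟩ := h
      simp only [Int.even_iff, Int.odd_iff] at a1 a2
      omega

lemma even_of_mul_odd {a g : ℤ} (hg : g % 2 = 1) (h : Even (a * g)) : Even a := by
  rw [Int.even_iff] at h ⊢
  rwa [mul_odd_emod a g hg] at h

lemma odd_of_mul_odd {a g : ℤ} (hg : g % 2 = 1) (h : Odd (a * g)) : Odd a := by
  rw [Int.odd_iff] at h ⊢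
  rwa [mul_odd_emod a g hg] at h

lemma PP_of_mul {α : Fin 3} {a b g : ℤ} (hg : g % 2 = 1) (h : PP α (a * g) (b * g)) :
    PP α a b := by
  rcases fin3 α with rfl | rfl | rfl <;> obtain ⟨a1, a2⟩ := h
  · exact ⟨even_of_mul_odd hg a1, odd_of_mul_odd hg a2⟩
  · exact ⟨odd_of_mul_odd hg a1, odd_of_mul_odd hg a2⟩
  · exact ⟨odd_of_mul_odd hg a1, even_of_mul_odd hg a2⟩

/-- key: no pair of class α with small positive denominator and |θ| strictly below r's. -/
lemma no_small_pair {x : ℝ} (hx : Irrational x) {r : ℚ} {α : Fin 3}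
    (hbest : ∀ s : ℚ, QParity α s → s.den ≤ r.den → s ≠ r →
      |(r.den : ℝ) * x - r.num| < |(s.den : ℝ) * x - s.num|)
    {n d : ℤ} (hPP : PP α n d) (hd : 0 < d) (hdle : d ≤ (r.den : ℤ))
    (habs : |(d : ℝ) * x - n| < |(r.den : ℝ) * x - r.num|) : False := by
  obtain ⟨q, g, hg, hden, hnum⟩ := reduce n d hd
  have hgodd : g % 2 = 1 := by
    rcases Int.emod_two_eq g with h2 | h2
    · exfalso
      apply PP_not_both_even hPP
      constructor
      · rw [← hnum, Int.mul_emod, h2, mul_zero]; rfl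
      · rw [← hden, Int.mul_emod, h2, mul_zero]; rfl
    · exact h2
  have hqPP : QParity α q := by
    rw [QParity_iff]
    exact PP_of_mul hgodd (by rwa [hden, hnum])
  have hqden : (q.den : ℤ) ≤ d :=
    calc (q.den : ℤ) = (q.den : ℤ) * 1 := by ring
      _ ≤ (q.den : ℤ) * g := by
          have : (0 : ℤ) < (q.den : ℤ) := by exact_mod_cast q.pos
          exact mul_le_mul_of_nonneg_left hg this.le
      _ = d := hden
  have hθ : (d : ℝ) * x - n = (g : ℝ) * ((q.den : ℝ) * x - q.num) := by
    rw [← hden, ← hnum]; push_cast; ring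
  have habs2 : |(q.den : ℝ) * x - q.num| < |(r.den : ℝ) * x - r.num| := by
    have h1 : |(d : ℝ) * x - n| = (g : ℝ) * |(q.den : ℝ) * x - q.num| := by
      rw [hθ, abs_mul, abs_of_pos (by exact_mod_cast hg)]
    have hg1 : (1 : ℝ) ≤ (g : ℝ) := by exact_mod_cast hg
    nlinarith [abs_nonneg ((q.den : ℝ) * x - q.num)]
  have hne : q ≠ r := by
    intro h; rw [h] at habs2; exact lt_irrefl _ habs2
  have hdle' : q.den ≤ r.den := by omega
  exact absurd (hbest q hqPP hdle' hne) (by linarith)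

lemma exists_int_near (y : ℝ) (hy : ∀ k : ℤ, y ≠ k) (p : ℤ) :
    ∃ m : ℤ, m % 2 = p % 2 ∧ |y - m| < 1 := by
  refine ⟨2 * round ((y - p) / 2) + p, by omega, ?_⟩
  set k := round ((y - p) / 2) with hk
  have h1 : |(y - p) / 2 - k| ≤ 1 / 2 := abs_sub_round _
  have h2 : |y - ((2 * k + p : ℤ) : ℝ)| ≤ 1 := by
    push_cast
    rw [show y - (2 * (k : ℝ) + p) = 2 * ((y - p) / 2 - k) by ring, abs_mul]
    rw [abs_two]
    linarith
  rcases h2.lt_or_eq with h | h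
  · exact h
  · exfalso
    rcases (abs_eq (by norm_num)).mp h with h3 | h3 <;> push_cast at h3
    · exact hy (2 * k + p + 1) (by push_cast; linarith)
    · exact hy (2 * k + p - 1) (by push_cast; linarith)

lemma exists_half {x : ℝ} (hx : Irrational x) :
    ∃ t : ℚ, QParity 2 t ∧ t.den = 2 ∧ |(t.den : ℝ) * x - t.num| < 1 := by
  obtain ⟨m, hm, hlt⟩ := exists_int_near (2 * x)
    (fun k hk => hx ⟨(k : ℚ) / 2, by push_cast; linarith⟩) 1
  have hmodd : Odd m := Int.odd_iff.mpr (by omega)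
  refine ⟨⟨m, 2, by norm_num, Nat.coprime_two_right.mpr (Int.natAbs_odd.mpr hmodd)⟩,
    ⟨hmodd, ?_⟩, rfl, ?_⟩
  · show Even ((2 : ℕ) : ℤ)
    decide
  show |((2 : ℕ) : ℝ) * x - (m : ℝ)| < 1
  push_cast
  rw [show (2 : ℝ) * x - m = 2 * x - m by ring]
  exact hlt
lemma sign_ne_cases {a b : ℝ} (ha : a ≠ 0) (hb : b ≠ 0) (h : Real.sign a ≠ Real.sign b) :
    (0 < a ∧ b < 0) ∨ (a < 0 ∧ 0 < b) := by
  rcases ha.lt_or_gt with h1 | h1 <;> rcases hb.lt_or_gt with h2 | h2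
  · exact absurd (by rw [Real.sign_of_neg h1, Real.sign_of_neg h2]) h
  · exact Or.inr ⟨h1, h2⟩
  · exact Or.inl ⟨h1, h2⟩
  · exact absurd (by rw [Real.sign_of_pos h1, Real.sign_of_pos h2]) h

lemma sign_eq_cases {a b : ℝ} (ha : a ≠ 0) (hb : b ≠ 0) (h : Real.sign a = Real.sign b) :
    (0 < a ∧ 0 < b) ∨ (a < 0 ∧ b < 0) := by
  rcases ha.lt_or_gt with h1 | h1 <;> rcases hb.lt_or_gt with h2 | h2
  · exact Or.inr ⟨h1, h2⟩
  · exfalso; rw [Real.sign_of_neg h1, Real.sign_of_pos h2] at h; norm_num at h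
  · exfalso; rw [Real.sign_of_pos h1, Real.sign_of_neg h2] at h; norm_num at h
  · exact Or.inl ⟨h1, h2⟩

lemma abs_sub_sign_ne {a b : ℝ} (ha : a ≠ 0) (hb : b ≠ 0)
    (h : Real.sign a ≠ Real.sign b) : |a - b| = |a| + |b| := by
  rcases sign_ne_cases ha hb h with ⟨h1, h2⟩ | ⟨h1, h2⟩
  · rw [abs_of_pos h1, abs_of_neg h2, abs_of_pos (by linarith)]; ring
  · rw [abs_of_neg h1, abs_of_pos h2, abs_of_neg (by linarith)]; ring

lemma eq_of_sign_eq_abs_eq {a b : ℝ} (ha : a ≠ 0) (hb : b ≠ 0)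
    (h : Real.sign a = Real.sign b) (h2 : |a| = |b|) : a = b := by
  rcases sign_eq_cases ha hb h with ⟨h1, h1'⟩ | ⟨h1, h1'⟩
  · rw [abs_of_pos h1, abs_of_pos h1'] at h2; exact h2
  · rw [abs_of_neg h1, abs_of_neg h1'] at h2; linarith

lemma PP_neg {α : Fin 3} {n d : ℤ} (h : PP α n d) : PP α (-n) (-d) := by
  rcases fin3 α with rfl | rfl | rfl <;> obtain ⟨a1, a2⟩ := h
  · exact ⟨a1.neg, a2.neg⟩
  · exact ⟨a1.neg, a2.neg⟩
  · exact ⟨a1.neg, a2.neg⟩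

/-- Direction 1: best signed approximations are best in their parity class. -/
lemma class_of_signed {x : ℝ} (hx : Irrational x) {r : ℚ} (h : IsBestSignedApprox x r)
    {α : Fin 3} (hαr : QParity α r) : IsBestClassApprox α x r := by
  refine ⟨hαr, ?_⟩
  intro s hαs hden hne
  have ha : (r.den : ℝ) * x - r.num ≠ 0 := th_ne hx r
  have hb : (s.den : ℝ) * x - s.num ≠ 0 := th_ne hx s
  by_cases hsg : Real.sign ((s.den : ℝ) * x - s.num) = Real.sign ((r.den : ℝ) * x - r.num)
  · exact h s hden hne hsg
  by_contra hcon
  push_neg at hcon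
  have hdenZ : (s.den : ℤ) ≤ (r.den : ℤ) := by exact_mod_cast hden
  have hrden1 : (1 : ℤ) ≤ (r.den : ℤ) := by exact_mod_cast r.pos
  have hsden1 : (1 : ℤ) ≤ (s.den : ℤ) := by exact_mod_cast s.pos
  have hpar : (r.num - s.num) % 2 = 0 ∧ ((r.den : ℤ) - (s.den : ℤ)) % 2 = 0 := by
    rw [QParity_iff] at hαr hαs
    rcases fin3 α with rfl | rfl | rfl <;>
      · obtain ⟨a1, a2⟩ := hαr
        obtain ⟨b1, b2⟩ := hαs
        simp only [Int.even_iff, Int.odd_iff] at a1 a2 b1 b2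
        omega
  have habsum : |((r.den : ℝ) * x - r.num) - ((s.den : ℝ) * x - s.num)|
      = |(r.den : ℝ) * x - r.num| + |(s.den : ℝ) * x - s.num| :=
    abs_sub_sign_ne ha hb (fun hh => hsg hh.symm)
  rcases eq_or_lt_of_le (sub_nonneg.mpr hdenZ) with hdz | hdpos
  · -- equal denominators
    have hddeq : r.den = s.den := by omega
    have hnne : r.num - s.num ≠ 0 := by
      intro hc
      exact hne (Rat.ext (by omega) hddeq.symm)
    have hn2 : (2 : ℤ) ≤ |r.num - s.num| := by rw [Int.abs_eq_natAbs]; omega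
    have hE : ((r.den : ℝ) * x - r.num) - ((s.den : ℝ) * x - s.num)
        = -(((r.num - s.num : ℤ) : ℝ)) := by
      have : ((r.den : ℕ) : ℝ) = ((s.den : ℕ) : ℝ) := by exact_mod_cast congrArg Nat.cast hddeq
      push_cast
      rw [this]
      ring
    have h2le : (2 : ℝ) ≤ |(r.den : ℝ) * x - r.num| + |(s.den : ℝ) * x - s.num| := by
      rw [← habsum, hE, abs_neg, ← Int.cast_abs]
      exact_mod_cast hn2
    have h1le : (1 : ℝ) ≤ |(r.den : ℝ) * x - r.num| := by linarith
    -- build an integer approximation with the same sign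
    rcases ha.lt_or_gt with haneg | hapos
    · -- a < 0 : use the ceiling
      set t : ℚ := ((⌈x⌉ : ℤ) : ℚ) with ht
      have htden : t.den = 1 := Rat.den_intCast _
      have htnum : t.num = ⌈x⌉ := Rat.num_intCast _
      have hθ : (t.den : ℝ) * x - t.num = x - ⌈x⌉ := by
        rw [htden, htnum]; push_cast; ring
      have hθneg : x - (⌈x⌉ : ℝ) < 0 := by
        have hlt : x < (⌈x⌉ : ℝ) := lt_of_le_of_ne (Int.le_ceil x) (hx.ne_int _)
        linarith
      have hθgt : -1 < x - (⌈x⌉ : ℝ) := by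
        have h1 : ((⌈x⌉ : ℤ) : ℝ) ≤ ((⌊x⌋ : ℤ) : ℝ) + 1 := by
          exact_mod_cast Int.ceil_le_floor_add_one x
        have h2 : ((⌊x⌋ : ℤ) : ℝ) < x := lt_of_le_of_ne (Int.floor_le x) (hx.ne_int _).symm
        linarith
      have habs_t : |(t.den : ℝ) * x - t.num| < 1 := by
        rw [hθ, abs_of_neg hθneg]; linarith
      have htne : t ≠ r := by
        intro heq
        rw [heq] at habs_t
        linarith
      have := h t (by rw [htden]; exact r.pos) htne
        (by rw [hθ, Real.sign_of_neg hθneg, Real.sign_of_neg haneg])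
      linarith
    · -- 0 < a : use the floor
      set t : ℚ := ((⌊x⌋ : ℤ) : ℚ) with ht
      have htden : t.den = 1 := Rat.den_intCast _
      have htnum : t.num = ⌊x⌋ := Rat.num_intCast _
      have hθ : (t.den : ℝ) * x - t.num = x - ⌊x⌋ := by
        rw [htden, htnum]; push_cast; ring
      have hθpos : 0 < x - (⌊x⌋ : ℝ) := by
        have hlt : ((⌊x⌋ : ℤ) : ℝ) < x := lt_of_le_of_ne (Int.floor_le x) (hx.ne_int _).symm
        linarith
      have hθlt : x - (⌊x⌋ : ℝ) < 1 := by
        have := Int.lt_floor_add_one x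
        linarith
      have habs_t : |(t.den : ℝ) * x - t.num| < 1 := by
        rw [hθ, abs_of_pos hθpos]; linarith
      have htne : t ≠ r := by
        intro heq
        rw [heq] at habs_t
        linarith
      have := h t (by rw [htden]; exact r.pos) htne
        (by rw [hθ, Real.sign_of_pos hθpos, Real.sign_of_pos hapos])
      linarith
  · -- r.den > s.den : subtract and reduce; the factor is even
    obtain ⟨q, g, hg, hgden, hgnum⟩ := reduce (r.num - s.num) ((r.den : ℤ) - s.den) hdpos
    have hc : (q.den : ℝ) * x - q.num ≠ 0 := th_ne hx q
    have hg2 : 2 ≤ g := by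
      rcases Int.emod_two_eq g with h2 | h2
      · omega
      · exfalso
        apply not_both_even q
        constructor
        · have : Even (q.num * g) := by rw [hgnum, Int.even_iff]; omega
          exact Int.even_iff.mp (even_of_mul_odd h2 this)
        · have : Even ((q.den : ℤ) * g) := by rw [hgden, Int.even_iff]; omega
          exact Int.even_iff.mp (even_of_mul_odd h2 this)
    have hθ : (((r.den : ℤ) - s.den : ℤ) : ℝ) * x - ((r.num - s.num : ℤ) : ℝ)
        = (g : ℝ) * ((q.den : ℝ) * x - q.num) := by
      rw [← hgden, ← hgnum]; push_cast; ring
    have hE : (((r.den : ℤ) - s.den : ℤ) : ℝ) * x - ((r.num - s.num : ℤ) : ℝ)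
        = ((r.den : ℝ) * x - r.num) - ((s.den : ℝ) * x - s.num) := by
      push_cast; ring
    have hgR : (0 : ℝ) < (g : ℝ) := by exact_mod_cast hg
    have hgabs : (g : ℝ) * |(q.den : ℝ) * x - q.num|
        = |(r.den : ℝ) * x - r.num| + |(s.den : ℝ) * x - s.num| := by
      rw [← habsum, ← hE, hθ, abs_mul, abs_of_pos hgR]
    have hg2R : (2 : ℝ) ≤ (g : ℝ) := by exact_mod_cast hg2
    have hqabs : |(q.den : ℝ) * x - q.num| ≤ |(r.den : ℝ) * x - r.num| := by
      nlinarith [abs_nonneg ((q.den : ℝ) * x - q.num)]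
    have hqden : (q.den : ℤ) ≤ (r.den : ℤ) - s.den :=
      calc (q.den : ℤ) = (q.den : ℤ) * 1 := by ring
        _ ≤ (q.den : ℤ) * g := by
            have hp : (0 : ℤ) < (q.den : ℤ) := by exact_mod_cast q.pos
            exact mul_le_mul_of_nonneg_left hg hp.le
        _ = (r.den : ℤ) - s.den := hgden
    have hqdenlt : q.den < r.den := by omega
    have hqne : q ≠ r := by
      intro heq
      rw [heq] at hqdenlt
      exact lt_irrefl _ hqdenlt
    have hsgq : Real.sign ((q.den : ℝ) * x - q.num)
        = Real.sign ((r.den : ℝ) * x - r.num) := by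
      have hgpos : (0 : ℝ) < g := by linarith
      rcases sign_ne_cases hb ha hsg with ⟨h1, h2⟩ | ⟨h1, h2⟩
      · -- b > 0, a < 0 : a - b < 0 so c < 0
        have : (g : ℝ) * ((q.den : ℝ) * x - q.num) < 0 := by rw [← hθ, hE]; linarith
        have hcneg : (q.den : ℝ) * x - q.num < 0 := by nlinarith
        rw [Real.sign_of_neg hcneg, Real.sign_of_neg h2]
      · -- b < 0, 0 < a : a - b > 0 so c > 0
        have : 0 < (g : ℝ) * ((q.den : ℝ) * x - q.num) := by rw [← hθ, hE]; linarith
        have hcpos : 0 < (q.den : ℝ) * x - q.num := by nlinarith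
        rw [Real.sign_of_pos hcpos, Real.sign_of_pos h2]
    have := h q (le_of_lt hqdenlt) hqne hsgq
    linarith
/-- Direction 2: a best class approximation is a best signed approximation. -/
lemma signed_of_class {x : ℝ} (hx : Irrational x) {r : ℚ} {α : Fin 3}
    (h : IsBestClassApprox α x r) : IsBestSignedApprox x r := by
  obtain ⟨hαr, hbest⟩ := h
  intro s hden hne hsg
  have ha : (r.den : ℝ) * x - r.num ≠ 0 := th_ne hx r
  have hb : (s.den : ℝ) * x - s.num ≠ 0 := th_ne hx s
  by_contra hcon
  push_neg at hcon
  have hdenZ : (s.den : ℤ) ≤ (r.den : ℤ) := by exact_mod_cast hden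
  have hrden1 : (1 : ℤ) ≤ (r.den : ℤ) := by exact_mod_cast r.pos
  have hsden1 : (1 : ℤ) ≤ (s.den : ℤ) := by exact_mod_cast s.pos
  have hblt : |(s.den : ℝ) * x - s.num| < |(r.den : ℝ) * x - r.num| := by
    rcases lt_or_eq_of_le hcon with h1 | h1
    · exact h1
    · exact absurd (th_inj hx (eq_of_sign_eq_abs_eq hb ha hsg h1)) hne
  -- the mirrored pair (2 s.num - r.num, 2 s.den - r.den) has class α
  have hPP : PP α (2 * s.num - r.num) (2 * (s.den : ℤ) - (r.den : ℤ)) := by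
    rw [QParity_iff] at hαr
    rcases fin3 α with rfl | rfl | rfl <;> obtain ⟨a1, a2⟩ := hαr
    · exact ⟨Int.even_iff.mpr (by have := Int.even_iff.mp a1; omega),
        Int.odd_iff.mpr (by have := Int.odd_iff.mp a2; omega)⟩
    · exact ⟨Int.odd_iff.mpr (by have := Int.odd_iff.mp a1; omega),
        Int.odd_iff.mpr (by have := Int.odd_iff.mp a2; omega)⟩
    · exact ⟨Int.odd_iff.mpr (by have := Int.odd_iff.mp a1; omega),
        Int.even_iff.mpr (by have := Int.even_iff.mp a2; omega)⟩
  have hE : ((2 * (s.den : ℤ) - (r.den : ℤ) : ℤ) : ℝ) * x - ((2 * s.num - r.num : ℤ) : ℝ)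
      = 2 * ((s.den : ℝ) * x - s.num) - ((r.den : ℝ) * x - r.num) := by
    push_cast; ring
  have habs2 : |2 * ((s.den : ℝ) * x - s.num) - ((r.den : ℝ) * x - r.num)|
      < |(r.den : ℝ) * x - r.num| := by
    rcases sign_eq_cases hb ha hsg with ⟨h1, h2⟩ | ⟨h1, h2⟩
    · rw [abs_of_pos h1, abs_of_pos h2] at hblt
      rw [abs_of_pos h2, abs_lt]
      constructor <;> linarith
    · rw [abs_of_neg h1, abs_of_neg h2] at hblt
      rw [abs_of_neg h2, abs_lt]
      constructor <;> linarith
  rcases lt_trichotomy (2 * (s.den : ℤ) - (r.den : ℤ)) 0 with hd | hd | hd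
  · -- negative denominator difference: negate the pair
    apply no_small_pair hx hbest (PP_neg hPP) (by omega) (by omega)
    have : ((-(2 * (s.den : ℤ) - (r.den : ℤ)) : ℤ) : ℝ) * x - ((-(2 * s.num - r.num) : ℤ) : ℝ)
        = -(2 * ((s.den : ℝ) * x - s.num) - ((r.den : ℝ) * x - r.num)) := by
      push_cast; ring
    rw [this, abs_neg]
    exact habs2
  · -- zero: then α = 2 and |θ r| > 1
    rw [hd] at hPP
    have hn2odd : (2 * s.num - r.num) % 2 = 1 ∧ α = 2 := by
      rcases fin3 α with rfl | rfl | rfl <;> obtain ⟨a1, a2⟩ := hPP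
      · exfalso; rw [Int.odd_iff] at a2; omega
      · exfalso; rw [Int.odd_iff] at a2; omega
      · exact ⟨Int.odd_iff.mp a1, rfl⟩
    obtain ⟨hodd, rfl⟩ := hn2odd
    have hrdene : (r.den : ℤ) % 2 = 0 := by
      obtain ⟨-, a2⟩ := hαr
      exact Int.even_iff.mp a2
    have habs3 : |((2 * s.num - r.num : ℤ) : ℝ)| < |(r.den : ℝ) * x - r.num| := by
      have h0 : ((0 : ℤ) : ℝ) * x - ((2 * s.num - r.num : ℤ) : ℝ)
          = 2 * ((s.den : ℝ) * x - s.num) - ((r.den : ℝ) * x - r.num) := by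
        rw [← hd]; exact hE
      have : |((2 * s.num - r.num : ℤ) : ℝ)| =
          |((0 : ℤ) : ℝ) * x - ((2 * s.num - r.num : ℤ) : ℝ)| := by
        rw [show ((0 : ℤ) : ℝ) * x - ((2 * s.num - r.num : ℤ) : ℝ)
          = -((2 * s.num - r.num : ℤ) : ℝ) by push_cast; ring, abs_neg]
      rw [this, h0]
      exact habs2
    have h1lt : (1 : ℝ) < |(r.den : ℝ) * x - r.num| := by
      have : (1 : ℤ) ≤ |2 * s.num - r.num| := by rw [Int.abs_eq_natAbs]; omega
      have h1 : (1 : ℝ) ≤ |((2 * s.num - r.num : ℤ) : ℝ)| := by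
        rw [← Int.cast_abs]; exact_mod_cast this
      linarith
    obtain ⟨t, htPP, htden, htabs⟩ := exists_half hx
    have htne : t ≠ r := by
      intro heq
      rw [heq] at htabs
      linarith
    have htdenle : t.den ≤ r.den := by omega
    have := hbest t htPP htdenle htne
    linarith
  · -- positive
    apply no_small_pair hx hbest hPP hd (by omega)
    rw [hE]
    exact habs2
end BSAproof

/-- `S(x) = B^(0)(x) ⊔ B^(1)(x) ⊔ B^(∞)(x)` (disjoint union). -/
theorem bestSigned_eq_disjoint_union_bestClass (x : ℝ) (hx : Irrational x) :
    ({r : ℚ | IsBestSignedApprox x r} =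
      {r : ℚ | IsBestClassApprox 0 x r} ∪ {r : ℚ | IsBestClassApprox 1 x r} ∪
        {r : ℚ | IsBestClassApprox 2 x r}) ∧
    (∀ α β : Fin 3, α ≠ β →
      {r : ℚ | IsBestClassApprox α x r} ∩ {r : ℚ | IsBestClassApprox β x r} = ∅) := by
  constructor
  · ext r
    simp only [Set.mem_setOf_eq, Set.mem_union]
    constructor
    · intro h
      obtain ⟨α, hα⟩ := BSAproof.exists_parity r
      have hb := BSAproof.class_of_signed hx h hα
      rcases BSAproof.fin3 α with rfl | rfl | rfl
      · exact Or.inl (Or.inl hb)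
      · exact Or.inl (Or.inr hb)
      · exact Or.inr hb
    · rintro ((h | h) | h) <;> exact BSAproof.signed_of_class hx h
  · intro α β hne
    rw [Set.eq_empty_iff_forall_notMem]
    rintro r ⟨⟨h1, -⟩, ⟨h2, -⟩⟩
    exact hne (BSAproof.unique_parity h1 h2)
end

section
/- Let x be irrational with regular continued fraction convergents p_n/q_n. If a rational a/b in lowest terms satisfies b < q_n and |bx − a| < |q_{n−2}x − p_{n−2}| for some n ≥ 1, then a/b = p_{n−1}/q_{n−1} or a/b = (k p_{n−1} + p_{n−2})/(k q_{n−1} + q_{n−2}) for some 1 ≤ k < a_n. -/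
/-- Iterates of the Gauss map procedure producing complete quotients of `x`:
`t₀ = x`, `tₙ₊₁ = 1/(tₙ − ⌊tₙ⌋)`. -/
noncomputable def gaussIter (x : ℝ) : ℕ → ℝ
  | 0 => x
  | n + 1 => (gaussIter x n - ⌊gaussIter x n⌋)⁻¹

/-- The partial quotients `aₙ = ⌊tₙ⌋` of the regular continued fraction of `x`. -/
noncomputable def cfA (x : ℝ) (n : ℕ) : ℤ := ⌊gaussIter x n⌋

/-- Numerators of the principal convergents, shifted by one:
`cfP x 0 = p₋₁ = 1`, `cfP x (n+1) = pₙ`. -/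
noncomputable def cfP (x : ℝ) : ℕ → ℤ
  | 0 => 1
  | 1 => ⌊x⌋
  | n + 2 => cfA x (n + 1) * cfP x (n + 1) + cfP x n

/-- Denominators of the principal convergents, shifted by one:
`cfQ x 0 = q₋₁ = 0`, `cfQ x (n+1) = qₙ`. -/
noncomputable def cfQ (x : ℝ) : ℕ → ℤ
  | 0 => 0
  | 1 => 1
  | n + 2 => cfA x (n + 1) * cfQ x (n + 1) + cfQ x n

lemma gaussIter_irrational (x : ℝ) (hx : Irrational x) (n : ℕ) :
    Irrational (gaussIter x n) := by
  induction n with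
  | zero => exact hx
  | succ n ih => exact ((ih.sub_intCast _).inv)

lemma one_lt_gaussIter (x : ℝ) (hx : Irrational x) (n : ℕ) :
    1 < gaussIter x (n + 1) := by
  have h := gaussIter_irrational x hx n
  have h0 : 0 < gaussIter x n - ⌊gaussIter x n⌋ := by
    have := Int.floor_le (gaussIter x n)
    have hne := h.ne_int ⌊gaussIter x n⌋
    cases this.lt_or_eq with
    | inl h' => linarith
    | inr h' => exact absurd h'.symm hne
  have h1 : gaussIter x n - ⌊gaussIter x n⌋ < 1 := by
    have := Int.lt_floor_add_one (gaussIter x n)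
    linarith
  show 1 < (gaussIter x n - ⌊gaussIter x n⌋)⁻¹
  exact (one_lt_inv₀ h0).mpr h1

lemma cfA_pos (x : ℝ) (hx : Irrational x) (n : ℕ) : 1 ≤ cfA x (n + 1) := by
  have := one_lt_gaussIter x hx n
  have : (1 : ℤ) ≤ ⌊gaussIter x (n + 1)⌋ := by
    rw [Int.le_floor]; push_cast; linarith
  exact this

lemma cfQ_nonneg_pos (x : ℝ) (hx : Irrational x) (n : ℕ) :
    0 ≤ cfQ x n ∧ 1 ≤ cfQ x (n + 1) := by
  induction n with
  | zero => exact ⟨le_refl 0, le_refl 1⟩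
  | succ n ih =>
    refine ⟨by linarith [ih.2], ?_⟩
    show 1 ≤ cfA x (n + 1) * cfQ x (n + 1) + cfQ x n
    nlinarith [cfA_pos x hx n, ih.1, ih.2]

noncomputable def cfE (x : ℝ) (m : ℕ) : ℝ := (cfQ x m : ℝ) * x - (cfP x m : ℝ)

lemma cfE_rec (x : ℝ) (m : ℕ) :
    cfE x (m + 2) = (cfA x (m + 1) : ℝ) * cfE x (m + 1) + cfE x m := by
  simp only [cfE, cfP, cfQ]; push_cast; ring

lemma cfE_succ_mul (x : ℝ) (hx : Irrational x) (m : ℕ) :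
    cfE x (m + 1) * gaussIter x (m + 1) = -cfE x m := by
  induction m with
  | zero =>
    have hne : x - (⌊x⌋ : ℝ) ≠ 0 := sub_ne_zero.mpr (hx.ne_int ⌊x⌋)
    show cfE x 1 * (gaussIter x 0 - ⌊gaussIter x 0⌋)⁻¹ = -cfE x 0
    simp only [cfE, cfP, cfQ, gaussIter]
    push_cast
    linear_combination (mul_inv_cancel₀ hne)
  | succ m ih =>
    have hne : gaussIter x (m + 1) - (⌊gaussIter x (m + 1)⌋ : ℝ) ≠ 0 :=
      sub_ne_zero.mpr ((gaussIter_irrational x hx (m + 1)).ne_int _)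
    have hA : (cfA x (m + 1) : ℝ) = (⌊gaussIter x (m + 1)⌋ : ℝ) := rfl
    have ht : gaussIter x (m + 2) = (gaussIter x (m + 1) - ⌊gaussIter x (m + 1)⌋)⁻¹ := rfl
    have key : cfE x m = -(cfE x (m + 1) * gaussIter x (m + 1)) := by rw [ih]; ring
    rw [cfE_rec, ht, key, hA]
    linear_combination (-cfE x (m + 1)) * (mul_inv_cancel₀ hne)

lemma cfE_sign (x : ℝ) (hx : Irrational x) (m : ℕ) :
    0 < (-1 : ℝ) ^ (m + 1) * cfE x m := by
  induction m with
  | zero =>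
    simp [cfE, cfQ, cfP]
  | succ m ih =>
    have hmul := cfE_succ_mul x hx m
    have ht : 1 < gaussIter x (m + 1) := one_lt_gaussIter x hx m
    have h1 : 0 < ((-1 : ℝ) ^ (m + 2) * cfE x (m + 1)) * gaussIter x (m + 1) := by
      have : ((-1 : ℝ) ^ (m + 2) * cfE x (m + 1)) * gaussIter x (m + 1)
          = (-1 : ℝ) ^ (m + 1) * cfE x m := by
        rw [mul_assoc, hmul]; ring
      rw [this]; exact ih
    nlinarith
  
lemma cfE_det (x : ℝ) (m : ℕ) :
    cfP x m * cfQ x (m + 1) - cfP x (m + 1) * cfQ x m = (-1 : ℤ) ^ m := by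
  induction m with
  | zero => simp [cfP, cfQ]
  | succ m ih =>
    show cfP x (m+1) * (cfA x (m+1) * cfQ x (m+1) + cfQ x m)
        - (cfA x (m+1) * cfP x (m+1) + cfP x m) * cfQ x (m+1) = (-1:ℤ)^(m+1)
    have : (-1:ℤ)^(m+1) = -(-1:ℤ)^m := by ring
    rw [this, ← ih]; ring


/-- Lemma 3.2: if `a/b` in lowest terms satisfies `b < qₙ` and
`|bx − a| < |qₙ₋₂x − pₙ₋₂|`, then `a/b = pₙ₋₁/qₙ₋₁` or `a/b` is an intermediate
convergent `(k pₙ₋₁ + pₙ₋₂)/(k qₙ₋₁ + qₙ₋₂)` with `1 ≤ k < aₙ`. -/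
theorem intermediate_convergent_characterization
    (x : ℝ) (hx : Irrational x) (n : ℕ) (hn : 1 ≤ n) (a b : ℤ)
    (hb : 0 < b) (hab : Int.gcd a b = 1)
    (h1 : b < cfQ x (n + 1))
    (h2 : |(b : ℝ) * x - a| < |(cfQ x (n - 1) : ℝ) * x - cfP x (n - 1)|) :
    (a = cfP x n ∧ b = cfQ x n) ∨
      ∃ k : ℤ, 1 ≤ k ∧ k < cfA x n ∧
        a = k * cfP x n + cfP x (n - 1) ∧ b = k * cfQ x n + cfQ x (n - 1) := by
  obtain ⟨m, rfl⟩ : ∃ m, n = m + 1 := ⟨n - 1, (Nat.succ_pred_eq_of_pos hn).symm⟩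
  simp only [Nat.add_sub_cancel] at h2 ⊢
  set P : ℤ := cfP x (m + 1) with hP
  set Q : ℤ := cfQ x (m + 1) with hQ
  set P' : ℤ := cfP x m with hP'
  set Q' : ℤ := cfQ x m with hQ'
  set A : ℤ := cfA x (m + 1) with hA
  set s : ℤ := (-1) ^ m with hs
  have hs2 : s * s = 1 := by
    rw [hs, ← pow_add]
    exact Even.neg_one_pow ⟨m, rfl⟩
  have hd : P' * Q - P * Q' = s := cfE_det x m
  set u : ℤ := s * (b * P' - a * Q') with hu
  set v : ℤ := s * (a * Q - b * P) with hv
  have keyA : u * P + v * P' = a := by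
    have h' : u * P + v * P' = a * (s * s) := by
      rw [hu, hv]; linear_combination (s * a) * hd
    rw [h', hs2, mul_one]
  have keyB : u * Q + v * Q' = b := by
    have h' : u * Q + v * Q' = b * (s * s) := by
      rw [hu, hv]; linear_combination (s * b) * hd
    rw [h', hs2, mul_one]
  have hQ1 : 1 ≤ Q := (cfQ_nonneg_pos x hx m).2
  have hQ0 : 0 ≤ Q' := (cfQ_nonneg_pos x hx m).1
  have hA1 : 1 ≤ A := cfA_pos x hx m
  have h1' : b < A * Q + Q' := h1
  set sr : ℝ := (-1 : ℝ) ^ (m + 1) with hsr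
  have hsr2 : sr * sr = 1 := by
    rw [hsr, ← pow_add]
    exact Even.neg_one_pow ⟨m + 1, rfl⟩
  have habs : |sr| = 1 := by
    rw [hsr, abs_pow, abs_neg, abs_one, one_pow]
  have hh0 : 0 < sr * cfE x m := cfE_sign x hx m
  have hg : 0 < -sr * cfE x (m + 1) := by
    have h' := cfE_sign x hx (m + 1)
    have e : (-1 : ℝ) ^ (m + 1 + 1) = -sr := by rw [hsr, pow_succ]; ring
    rw [e] at h'; exact h'
  have hg2 : 0 < sr * cfE x (m + 2) := by
    have h' := cfE_sign x hx (m + 2)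
    have e : (-1 : ℝ) ^ (m + 2 + 1) = sr := by rw [hsr, pow_succ, pow_succ]; ring
    rw [e] at h'; exact h'
  have hrel : sr * cfE x m = (A : ℝ) * (-sr * cfE x (m + 1)) + sr * cfE x (m + 2) := by
    have h' := cfE_rec x m
    rw [← hA] at h'
    linear_combination (-sr) * h'
  have har : (a : ℝ) = (u : ℝ) * P + (v : ℝ) * P' := by exact_mod_cast keyA.symm
  have hbr : (b : ℝ) = (u : ℝ) * Q + (v : ℝ) * Q' := by exact_mod_cast keyB.symm
  have keyreal : (b : ℝ) * x - a
      = sr * ((v : ℝ) * (sr * cfE x m) - (u : ℝ) * (-sr * cfE x (m + 1))) := by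
    simp only [cfE]
    linear_combination x * hbr - har
      - ((v : ℝ) * ((Q' : ℝ) * x - P') + (u : ℝ) * ((Q : ℝ) * x - P)) * hsr2
  have H : |(v : ℝ) * (sr * cfE x m) - (u : ℝ) * (-sr * cfE x (m + 1))| < sr * cfE x m := by
    have e1 : |(b : ℝ) * x - a|
        = |(v : ℝ) * (sr * cfE x m) - (u : ℝ) * (-sr * cfE x (m + 1))| := by
      rw [keyreal, abs_mul, habs, one_mul]
    have e2 : |(Q' : ℝ) * x - P'| = sr * cfE x m := by
      have h' : |sr * cfE x m| = sr * cfE x m := abs_of_pos hh0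
      rw [abs_mul, habs, one_mul] at h'
      exact h'
    rw [e1, e2] at h2
    exact h2
  -- abstract everything
  set hR : ℝ := sr * cfE x m with hhR
  set gR : ℝ := -sr * cfE x (m + 1) with hgR
  set g2R : ℝ := sr * cfE x (m + 2) with hg2R
  clear_value hR gR g2R sr u v s A P Q P' Q'
  clear hu hv hs hd hs2 hsr hsr2 habs keyreal har hbr h2 h1 hhR hgR hg2R hP hQ hP' hQ' hA
  -- case analysis
  by_cases hv0 : v = 0
  · have ha' : a = u * P := by rw [← keyA, hv0]; ring
    have hb' : b = u * Q := by rw [← keyB, hv0]; ring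
    have hdvd : u ∣ (Int.gcd a b : ℤ) := Int.dvd_coe_gcd ⟨P, ha'⟩ ⟨Q, hb'⟩
    rw [hab] at hdvd
    rcases Int.isUnit_iff.mp (isUnit_of_dvd_one hdvd) with h | h
    · left
      exact ⟨by rw [ha', h, one_mul], by rw [hb', h, one_mul]⟩
    · exfalso
      rw [hb', h] at hb
      nlinarith
  · rcases lt_or_gt_of_ne hv0 with hvneg | hvpos
    · rcases le_or_gt u 0 with hu0 | hu0
      · exfalso
        nlinarith [keyB, mul_nonneg (by linarith : (0:ℤ) ≤ -u) (by linarith : (0:ℤ) ≤ Q),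
          mul_nonneg (by linarith : (0:ℤ) ≤ -v) hQ0]
      · exfalso
        have hur : (1 : ℝ) ≤ (u : ℝ) := by exact_mod_cast hu0
        have hvr : (v : ℝ) ≤ -1 := by exact_mod_cast (by omega : v ≤ -1)
        nlinarith [H, neg_abs_le ((v : ℝ) * hR - (u : ℝ) * gR), hh0, hg,
          mul_nonneg (by linarith : (0:ℝ) ≤ -(v:ℝ) - 1) (le_of_lt hh0),
          mul_nonneg (by linarith : (0:ℝ) ≤ (u:ℝ) - 1) (le_of_lt hg)]
    · rcases le_or_gt u 0 with hu0 | hu0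
      · exfalso
        have hur : (u : ℝ) ≤ 0 := by exact_mod_cast hu0
        have hvr : (1 : ℝ) ≤ (v : ℝ) := by exact_mod_cast hvpos
        nlinarith [H, le_abs_self ((v : ℝ) * hR - (u : ℝ) * gR), hh0, hg,
          mul_nonneg (by linarith : (0:ℝ) ≤ (v:ℝ) - 1) (le_of_lt hh0),
          mul_nonneg (by linarith : (0:ℝ) ≤ -(u:ℝ)) (le_of_lt hg)]
      · have hultA : u < A := by
          by_contra hcon
          push_neg at hcon
          nlinarith [keyB, h1', mul_nonneg (by linarith : (0:ℤ) ≤ u - A) (by linarith : (0:ℤ) ≤ Q),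
            mul_nonneg (by linarith : (0:ℤ) ≤ v - 1) hQ0]
        have hv1 : v = 1 := by
          by_contra hv1
          have hvr : (2 : ℝ) ≤ (v : ℝ) := by exact_mod_cast (by omega : (2:ℤ) ≤ v)
          have hur : (u : ℝ) ≤ (A : ℝ) - 1 := by
            have h' : (u : ℝ) ≤ ((A - 1 : ℤ) : ℝ) := by exact_mod_cast (by omega : u ≤ A - 1)
            push_cast at h'
            linarith
          nlinarith [H, le_abs_self ((v : ℝ) * hR - (u : ℝ) * gR), hh0, hg, hg2, hrel,
            mul_nonneg (by linarith : (0:ℝ) ≤ (v:ℝ) - 2) (le_of_lt hh0),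
            mul_nonneg (by linarith : (0:ℝ) ≤ (A:ℝ) - 1 - (u:ℝ)) (le_of_lt hg)]
        right
        exact ⟨u, hu0, hultA, by rw [← keyA, hv1]; ring, by rw [← keyB, hv1]; ring⟩
end

section
/- The Möbius action (with conjugation for determinant −1) of H_0 = [[−1,2],[0,1]], H_1 = [[−1,0],[0,1]], and H_∞ = [[1,0],[2,−1]] on rational numbers preserves the parity class: for each α ∈ {0, 1, ∞} and each H ∈ {H_0, H_1, H_∞}, if p/q ∈ Q^(α) (and H·(p/q) is defined), then H·(p/q) ∈ Q^(α). -/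
lemma parity_div (a b : ℤ) (hb : b ≠ 0) (h : Nat.Coprime a.natAbs b.natAbs) :
    ((a : ℚ) / b).num % 2 = a % 2 ∧ ((((a : ℚ) / b).den : ℤ)) % 2 = b % 2 := by
  rcases hb.lt_or_gt with h1 | h1
  · have hb' : (0 : ℤ) < -b := by omega
    have h' : Nat.Coprime (-a).natAbs (-b).natAbs := by
      simpa [Int.natAbs_neg] using h
    have heq : (a : ℚ) / b = ((-a : ℤ) : ℚ) / ((-b : ℤ) : ℚ) := by
      push_cast
      rw [neg_div_neg_eq]
    rw [heq, Rat.num_div_eq_of_coprime hb' h', Rat.den_div_eq_of_coprime hb' h']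
    omega
  · rw [Rat.num_div_eq_of_coprime h1 h, Rat.den_div_eq_of_coprime h1 h]
    omega

lemma coprime_iff (a b : ℤ) : Nat.Coprime a.natAbs b.natAbs ↔ IsCoprime a b := by
  rw [Int.isCoprime_iff_gcd_eq_one]
  rfl

/-- the Möbius actions of `H₀`, `H₁`, `H∞` preserve each parity class
`Q^(α)` of rational numbers (wherever defined). -/
theorem H_matrices_preserve_parity :
    ∀ H ∈ ({!![(-1 : ℤ), 2; 0, 1], !![(-1 : ℤ), 0; 0, 1], !![(1 : ℤ), 0; 2, -1]} :
        Set (Matrix (Fin 2) (Fin 2) ℤ)),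
      ∀ α : Fin 3, ∀ r : ℚ, QParity α r →
        ((H 1 0 : ℚ) * r + (H 1 1 : ℚ)) ≠ 0 →
        QParity α (((H 0 0 : ℚ) * r + (H 0 1 : ℚ)) / ((H 1 0 : ℚ) * r + (H 1 1 : ℚ))) := by
  have hrd : ∀ r : ℚ, (r.den : ℤ) ≠ 0 := fun r => by exact_mod_cast r.den_nz
  intro H hH α r hr hden
  have hcop : IsCoprime r.num (r.den : ℤ) := (coprime_iff _ _).mp r.reduced
  obtain ⟨u, v, huv⟩ := hcop
  have hrnum : (r.num : ℚ) = r * (r.den : ℚ) := by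
    rw [mul_comm, Rat.den_mul_eq_num]
  simp only [Set.mem_insert_iff, Set.mem_singleton_iff] at hH
  rcases hH with rfl | rfl | rfl <;>
    simp only [Matrix.of_apply, Matrix.cons_val', Matrix.cons_val_zero, Matrix.cons_val_one, Matrix.head_cons,
      Matrix.empty_val', Matrix.cons_val_fin_one, Matrix.head_fin_const, Int.cast_neg,
      Int.cast_one, Int.cast_two, Int.cast_zero, Int.cast_ofNat] at hden ⊢
  · -- H₀ : (-r + 2)/1 = (2*den - num)/den
    have heq : (-1 * r + 2) / (0 * r + 1)
        = ((2 * (r.den : ℤ) - r.num : ℤ) : ℚ) / (((r.den : ℤ) : ℤ) : ℚ) := by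
      push_cast
      rw [show (0:ℚ)*r+1 = 1 by ring, div_one, eq_div_iff (by exact_mod_cast hrd r)]
      rw [hrnum]; ring
    have hc : IsCoprime (2 * (r.den : ℤ) - r.num) ((r.den : ℤ)) :=
      ⟨-u, v + 2 * u, by linear_combination huv⟩
    have hp := parity_div _ _ (hrd r) ((coprime_iff _ _).mpr hc)
    rw [heq]
    fin_cases α <;> simp only [QParity, Int.even_iff, Int.odd_iff] at hr ⊢ <;> omega
  · -- H₁ : -r
    have heq : (-1 * r + 0) / (0 * r + 1)
        = ((-r.num : ℤ) : ℚ) / (((r.den : ℤ) : ℤ) : ℚ) := by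
      push_cast
      rw [show (0:ℚ)*r+1 = 1 by ring, div_one, eq_div_iff (by exact_mod_cast hrd r)]
      rw [hrnum]; ring
    have hc : IsCoprime (-r.num) ((r.den : ℤ)) := ⟨-u, v, by linear_combination huv⟩
    have hp := parity_div _ _ (hrd r) ((coprime_iff _ _).mpr hc)
    rw [heq]
    fin_cases α <;> simp only [QParity, Int.even_iff, Int.odd_iff] at hr ⊢ <;> omega
  · -- H∞ : r/(2r-1) = num/(2num - den)
    have hb : (2 * r.num - (r.den : ℤ)) ≠ 0 := by
      intro h
      apply hden
      have h2 := congrArg (fun z : ℤ => (z : ℚ)) h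
      push_cast at h2
      rw [hrnum] at h2
      have hd : (r.den : ℚ) ≠ 0 := by exact_mod_cast hrd r
      have : (r.den : ℚ) * (2 * r + -1) = 0 := by linarith
      rcases mul_eq_zero.mp this with h3 | h3
      · exact absurd h3 hd
      · exact h3
    have heq : (1 * r + 0) / (2 * r + -1)
        = ((r.num : ℤ) : ℚ) / (((2 * r.num - (r.den : ℤ)) : ℤ) : ℚ) := by
      push_cast
      rw [div_eq_div_iff hden (by
        intro h
        apply hb
        rw [hrnum] at h
        have hd : (r.den : ℚ) ≠ 0 := by exact_mod_cast hrd r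
        have : (r.den : ℚ) * (2 * r + -1) = 0 := by linarith
        rcases mul_eq_zero.mp this with h3 | h3
        · exact absurd h3 hd
        · exact absurd h3 hden)]
      rw [hrnum]; ring
    have hc : IsCoprime (r.num) (2 * r.num - (r.den : ℤ)) :=
      ⟨u + 2 * v, -v, by linear_combination huv⟩
    have hp := parity_div _ _ hb ((coprime_iff _ _).mpr hc)
    rw [heq]
    fin_cases α <;> simp only [QParity, Int.even_iff, Int.odd_iff] at hr ⊢ <;> omega
end

section
/- For irrational x ∈ (0,1) with x = [0; a_1, a_2, …] and m = a_1 (the first partial quotient): if m is even, then J (H_1 H_∞)^{m/2} · x = 1/x − m, and if m is odd, then K J H_∞ (H_1 H_∞)^{(m−1)/2} · x = 1/x − m; in both cases the result is the Gauss map value G(x) = 1/x − ⌊1/x⌋. -/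
/-- The Möbius action of an integer matrix on a real number. -/
noncomputable def moebius (M : Matrix (Fin 2) (Fin 2) ℤ) (x : ℝ) : ℝ :=
  ((M 0 0 : ℝ) * x + (M 0 1 : ℝ)) / ((M 1 0 : ℝ) * x + (M 1 1 : ℝ))

lemma pow_lem (k : ℕ) :
    (!![(-1 : ℤ), 0; 0, 1] * !![(1 : ℤ), 0; 2, -1]) ^ k
      = !![((-1 : ℤ)) ^ k, 0; ((-1 : ℤ)) ^ (k + 1) * (2 * k), ((-1 : ℤ)) ^ k] := by
  induction k with
  | zero => simp [Matrix.one_fin_two]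
  | succ n ih =>
    rw [pow_succ, ih]
    ext i j
    fin_cases i <;> fin_cases j <;>
      simp [Matrix.mul_apply, Fin.sum_univ_two, pow_succ] <;> push_cast <;> ring

lemma moebius_expl (a b c d : ℤ) (x : ℝ) :
    moebius !![a, b; c, d] x = ((a : ℝ) * x + b) / ((c : ℝ) * x + d) := by
  simp [moebius]

lemma evenM (k : ℕ) :
    !![(0 : ℤ), 1; 1, 0] * (!![(-1 : ℤ), 0; 0, 1] * !![(1 : ℤ), 0; 2, -1]) ^ k
      = !![((-1 : ℤ)) ^ (k + 1) * (2 * k), ((-1 : ℤ)) ^ k; ((-1 : ℤ)) ^ k, 0] := by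
  rw [pow_lem]
  ext i j
  fin_cases i <;> fin_cases j <;> simp [Matrix.mul_apply, Fin.sum_univ_two]

lemma oddM (k : ℕ) :
    !![(-1 : ℤ), 1; 0, 1] * !![(0 : ℤ), 1; 1, 0] * !![(1 : ℤ), 0; 2, -1] *
      (!![(-1 : ℤ), 0; 0, 1] * !![(1 : ℤ), 0; 2, -1]) ^ k
      = !![((-1 : ℤ)) ^ (k + 1) * (2 * k + 1), ((-1 : ℤ)) ^ k; ((-1 : ℤ)) ^ k, 0] := by
  rw [pow_lem]
  ext i j
  fin_cases i <;> fin_cases j <;>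
    simp [Matrix.mul_apply, Fin.sum_univ_two, pow_succ] <;> ring

/-- for irrational `x ∈ (0,1)` with first partial quotient `m = ⌊1/x⌋`,
the Gauss map value `1/x − m = 1/x − ⌊1/x⌋` is realized by `J (H₁H∞)^{m/2}` for even
`m` and by `KJH∞ (H₁H∞)^{(m−1)/2}` for odd `m`. -/
theorem gauss_map_matrices (x : ℝ) (hx : Irrational x) (h0 : 0 < x) (h1 : x < 1)
    (m : ℤ) (hm : m = ⌊1 / x⌋) :
    (Even m →
      moebius (!![(0 : ℤ), 1; 1, 0] *
        (!![(-1 : ℤ), 0; 0, 1] * !![(1 : ℤ), 0; 2, -1]) ^ (m.toNat / 2)) x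
        = 1 / x - (m : ℝ)) ∧
    (Odd m →
      moebius (!![(-1 : ℤ), 1; 0, 1] * !![(0 : ℤ), 1; 1, 0] * !![(1 : ℤ), 0; 2, -1] *
        (!![(-1 : ℤ), 0; 0, 1] * !![(1 : ℤ), 0; 2, -1]) ^ ((m.toNat - 1) / 2)) x
        = 1 / x - (m : ℝ)) ∧
    1 / x - (m : ℝ) = 1 / x - (⌊1 / x⌋ : ℝ) := by
  have hx0 : x ≠ 0 := ne_of_gt h0
  have hm1 : 1 ≤ m := by
    rw [hm]
    apply Int.le_floor.mpr
    push_cast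
    rw [le_div_iff₀ h0]
    linarith
  have hmn : (m.toNat : ℤ) = m := Int.toNat_of_nonneg (by linarith)
  have hmnR : (m.toNat : ℝ) = (m : ℝ) := by exact_mod_cast congrArg (Int.cast : ℤ → ℝ) hmn
  have hne : ∀ k : ℕ, ((-1 : ℝ) ^ k) ≠ 0 := fun k => pow_ne_zero k (by norm_num)
  refine ⟨?_, ?_, by rw [hm]⟩
  · intro he
    obtain ⟨r, hr⟩ := he
    set k := m.toNat / 2 with hk
    have h2k : (2 * k : ℕ) = m.toNat := by omega
    have hmk : (m : ℝ) = 2 * (k : ℝ) := by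
      rw [← hmnR, ← h2k]; push_cast; ring
    rw [evenM]
    rw [moebius_expl]
    push_cast
    rw [hmk]
    have : ((-1 : ℝ) ^ (k + 1) * (2 * k) * x + (-1) ^ k)
        = (-1) ^ k * (-(2 * k) * x + 1) := by ring
    rw [this]
    have : ((-1 : ℝ) ^ k * x + 0) = (-1) ^ k * x := by ring
    rw [this, mul_div_mul_left _ _ (hne k)]
    field_simp
    ring
  · intro ho
    obtain ⟨r, hr⟩ := ho
    set k := (m.toNat - 1) / 2 with hk
    have h2k : (2 * k + 1 : ℕ) = m.toNat := by omega
    have hmk : (m : ℝ) = 2 * (k : ℝ) + 1 := by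
      rw [← hmnR, ← h2k]; push_cast; ring
    rw [oddM]
    rw [moebius_expl]
    push_cast
    rw [hmk]
    have : ((-1 : ℝ) ^ (k + 1) * (2 * k + 1) * x + (-1) ^ k)
        = (-1) ^ k * (-(2 * k + 1) * x + 1) := by ring
    rw [this]
    have : ((-1 : ℝ) ^ k * x + 0) = (-1) ^ k * x := by ring
    rw [this, mul_div_mul_left _ _ (hne k)]
    field_simp
    ring
end
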